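/- arXiv:2107.08864 — 11 statements merged into one kernel-verified Lean document; each statement's English description precedes it below -/
import Mathlib

section
/- For even d, the hyperdeterminant is the unique function Δ : T^d(n) → F that is multilinear in each slice, skew-symmetric under swapping any two parallel slices, and satisfies Δ(I) = 1 for the diagonal identity tensor I. -/
open Finset

variable {F : Type*}

section Defs
variable [CommRing F] {d n : ℕ}

/-- Cayley's first hyperdeterminant. -/
def hdet [NeZero d] (T : (Fin d → Fin n) → F) : F :=
  ∑ σ : Fin d → Equiv.Perm (Fin n),
    if σ 0 = 1 then
      ((((∏ ℓ, Equiv.Perm.sign (σ ℓ)) : ℤˣ) : ℤ) : F) * ∏ i, T (fun ℓ => σ ℓ i)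
    else 0

/-- The diagonal identity tensor. -/
def diagT [NeZero d] : (Fin d → Fin n) → F :=
  fun i => if ∀ ℓ, i ℓ = i 0 then 1 else 0

/-- The set of natural numbers `r` such that `T` decomposes as a sum of `r`
tensors from `S`. -/
def Decomps (S : Set ((Fin d → Fin n) → F)) (T : (Fin d → Fin n) → F) : Set ℕ :=
  {r | ∃ c : Fin r → ((Fin d → Fin n) → F), (∀ ℓ, c ℓ ∈ S) ∧ ∑ ℓ, c ℓ = T}

/-- The rank function associated to a set `S` of simple tensors. -/
noncomputable def rankS (S : Set ((Fin d → Fin n) → F)) (T : (Fin d → Fin n) → F) : ℕ :=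
  sInf (Decomps S T)

/-- `T` depends only on the coordinates in `A`. -/
def DependsOnlyOn (A : Set (Fin d)) (T : (Fin d → Fin n) → F) : Prop :=
  ∀ i j : Fin d → Fin n, (∀ ℓ ∈ A, i ℓ = j ℓ) → T i = T j

/-- Simple tensors for the tensor rank: fully decomposable tensors. -/
def tensorSimple : Set ((Fin d → Fin n) → F) :=
  {T | ∃ v : Fin d → (Fin n → F), (∀ ℓ, v ℓ ≠ 0) ∧ T = fun i => ∏ ℓ, v ℓ (i ℓ)}

/-- Simple tensors for the slice rank: decomposable along some coordinate. -/
def sliceSimple : Set ((Fin d → Fin n) → F) :=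
  {T | ∃ (k : Fin d) (v : Fin n → F) (T₁ : (Fin d → Fin n) → F),
    v ≠ 0 ∧ DependsOnlyOn {k}ᶜ T₁ ∧ T = fun i => v (i k) * T₁ i}

/-- Simple tensors for the partition rank: decomposable with respect to a
set partition of the coordinates into two nonempty blocks. -/
def partitionSimple : Set ((Fin d → Fin n) → F) :=
  {T | ∃ (A : Set (Fin d)) (T₁ T₂ : (Fin d → Fin n) → F),
    A.Nonempty ∧ Aᶜ.Nonempty ∧ T₁ ≠ 0 ∧ T₂ ≠ 0 ∧
    DependsOnlyOn A T₁ ∧ DependsOnlyOn Aᶜ T₂ ∧ T = fun i => T₁ i * T₂ i}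

/-- Simple tensors for the odd partition rank: decomposable with respect to a
set partition of the coordinates with one block `B` of odd size not containing
the first coordinate. -/
def oddPartitionSimple [NeZero d] : Set ((Fin d → Fin n) → F) :=
  {T | ∃ (B : Finset (Fin d)) (T₁ T₂ : (Fin d → Fin n) → F),
    Odd B.card ∧ (0 : Fin d) ∉ B ∧ T₁ ≠ 0 ∧ T₂ ≠ 0 ∧
    DependsOnlyOn (↑Bᶜ) T₁ ∧ DependsOnlyOn (↑B) T₂ ∧ T = fun i => T₁ i * T₂ i}

/-- The multilinear product `(A_1, …, A_d) ⬝ T`, expressing a change of basis. -/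
def mprod (A : Fin d → Matrix (Fin n) (Fin n) F) (T : (Fin d → Fin n) → F) :
    (Fin d → Fin n) → F :=
  fun i => ∑ j : Fin d → Fin n, (∏ ℓ, A ℓ (i ℓ) (j ℓ)) * T j

/-- The subtensor of `T` given by index maps `e`. -/
def subT {m : ℕ} (T : (Fin d → Fin n) → F) (e : Fin d → (Fin m → Fin n)) :
    (Fin d → Fin m) → F :=
  fun j => T fun ℓ => e ℓ (j ℓ)

/-- `T` is `k`-null: all `k × ⋯ × k` hyperdeterminant minors of `T` vanish. -/
def kNull [NeZero d] (k : ℕ) (T : (Fin d → Fin n) → F) : Prop :=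
  ∀ e : Fin d → (Fin k → Fin n), (∀ ℓ, StrictMono (e ℓ)) → hdet (subT T e) = 0

end Defs

section AuxHdetUnique

variable [CommRing F] {d n : ℕ} [NeZero d]

/-- A tensor with a zero slice maps to zero. -/
lemma auxU_zero (Δ : ((Fin d → Fin n) → F) → F)
    (hsmul : ∀ (k : Fin d) (ℓ : Fin n) (c : F) (T T' : (Fin d → Fin n) → F),
      (∀ i, i k ≠ ℓ → T' i = T i) → (∀ i, i k = ℓ → T' i = c * T i) →
      Δ T' = c * Δ T)
    (k : Fin d) (ℓ : Fin n) (T : (Fin d → Fin n) → F)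
    (h : ∀ i, i k = ℓ → T i = 0) : Δ T = 0 := by
  have := hsmul k ℓ 0 T T (fun i _ => rfl) (fun i hi => by rw [h i hi, zero_mul])
  rw [this, zero_mul]

/-- Action of a single permutation in one direction. -/
lemma auxU_one (Δ : ((Fin d → Fin n) → F) → F)
    (hswap : ∀ (k : Fin d) (a b : Fin n), a ≠ b → ∀ T : (Fin d → Fin n) → F,
      Δ (fun i => T (Function.update i k (Equiv.swap a b (i k)))) = - Δ T)
    (k : Fin d) (τ : Equiv.Perm (Fin n)) :
    ∀ T : (Fin d → Fin n) → F,
      Δ (fun i => T (Function.update i k (τ (i k))))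
        = (((Equiv.Perm.sign τ : ℤˣ) : ℤ) : F) * Δ T := by
  refine Equiv.Perm.swap_induction_on' (motive := fun τ => ∀ T : (Fin d → Fin n) → F,
      Δ (fun i => T (Function.update i k (τ (i k))))
        = (((Equiv.Perm.sign τ : ℤˣ) : ℤ) : F) * Δ T) τ ?_ ?_
  · intro T; simp [Function.update_eq_self]
  · intro f x y hxy IH T
    have h := hswap k x y hxy (fun i => T (Function.update i k (f (i k))))
    simp only [Function.update_self, Function.update_idem] at h
    simp only [Equiv.Perm.mul_apply]
    rw [h, IH T, Equiv.Perm.sign_mul, Equiv.Perm.sign_swap hxy]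
    simp only [Units.val_mul, Int.cast_mul, Units.val_neg, Units.val_one, Int.cast_neg,
      Int.cast_one]
    ring

/-- Action of a family of permutations, one in each direction. -/
lemma auxU_many (Δ : ((Fin d → Fin n) → F) → F)
    (hswap : ∀ (k : Fin d) (a b : Fin n), a ≠ b → ∀ T : (Fin d → Fin n) → F,
      Δ (fun i => T (Function.update i k (Equiv.swap a b (i k)))) = - Δ T) :
    ∀ (s : Finset (Fin d)) (τ : Fin d → Equiv.Perm (Fin n)), (∀ k ∉ s, τ k = 1) →
      ∀ T : (Fin d → Fin n) → F,
        Δ (fun i => T (fun k => τ k (i k)))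
          = (((∏ k ∈ s, Equiv.Perm.sign (τ k) : ℤˣ) : ℤ) : F) * Δ T := by
  intro s
  induction s using Finset.induction_on with
  | empty =>
    intro τ hτ T
    have h1 : ∀ k, τ k = 1 := fun k => hτ k (Finset.notMem_empty k)
    simp [h1]
  | @insert a s' ha IH =>
    intro τ hτ T
    set τ' : Fin d → Equiv.Perm (Fin n) := Function.update τ a 1 with hτ'
    have h1 := auxU_one Δ hswap a (τ a) (fun i => T (fun k => τ' k (i k)))
    have h2 : (fun i : Fin d → Fin n => T fun k => τ' k (Function.update i a (τ a (i a)) k))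
        = fun i => T fun k => τ k (i k) := by
      funext i
      congr 1
      funext k
      by_cases hk : k = a
      · subst hk; simp [hτ']
      · rw [hτ']
        rw [Function.update_of_ne hk, Function.update_of_ne hk]
    rw [h2] at h1
    have hsup : ∀ k ∉ s', τ' k = 1 := by
      intro k hk
      by_cases hka : k = a
      · subst hka; simp [hτ']
      · rw [hτ', Function.update_of_ne hka]
        exact hτ k (by simp [hka, hk])
    rw [h1, IH τ' hsup T, Finset.prod_insert ha]
    have h3 : ∏ k ∈ s', Equiv.Perm.sign (τ' k) = ∏ k ∈ s', Equiv.Perm.sign (τ k) :=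
      Finset.prod_congr rfl fun k hk => by
        rw [hτ', Function.update_of_ne (fun h => ha (by rw [← h]; exact hk))]
    rw [h3]
    simp only [Units.val_mul, Int.cast_mul]
    ring

/-- Value on the basic tensors coming from a family of permutations. -/
lemma auxU_diag (Δ : ((Fin d → Fin n) → F) → F)
    (hswap : ∀ (k : Fin d) (a b : Fin n), a ≠ b → ∀ T : (Fin d → Fin n) → F,
      Δ (fun i => T (Function.update i k (Equiv.swap a b (i k)))) = - Δ T)
    (hnorm : Δ diagT = 1)
    (σ : Fin d → Equiv.Perm (Fin n)) (hσ : σ 0 = 1) :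
    Δ (fun i => if (fun k : {k : Fin d // k ≠ 0} => i k.1) = (fun k => σ k.1 (i 0))
        then (1 : F) else 0)
      = (((∏ k, Equiv.Perm.sign (σ k) : ℤˣ) : ℤ) : F) := by
  have hσ0 : ∀ x : Fin n, (σ 0)⁻¹ x = x := by intro x; rw [hσ]; rfl
  have h0 : (fun i : Fin d → Fin n =>
      if (fun k : {k : Fin d // k ≠ 0} => i k.1) = (fun k => σ k.1 (i 0)) then (1 : F) else 0)
      = fun i => diagT (fun k => (σ k)⁻¹ (i k)) := by
    funext i
    rw [diagT]
    refine if_congr ?_ rfl rfl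
    rw [funext_iff]
    constructor
    · intro h ℓ
      show (σ ℓ)⁻¹ (i ℓ) = (σ 0)⁻¹ (i 0)
      rw [hσ0]
      by_cases hℓ : ℓ = 0
      · subst hℓ; rw [hσ0]
      · have hh : i ℓ = σ ℓ (i 0) := h ⟨ℓ, hℓ⟩
        rw [hh, ← Equiv.Perm.mul_apply, inv_mul_cancel, Equiv.Perm.one_apply]
    · intro h k
      show i k.1 = σ k.1 (i 0)
      have h1 : (σ k.1)⁻¹ (i k.1) = (σ 0)⁻¹ (i 0) := h k.1
      rw [hσ0] at h1
      rw [← h1, ← Equiv.Perm.mul_apply, mul_inv_cancel, Equiv.Perm.one_apply]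
  rw [h0, auxU_many Δ hswap Finset.univ (fun k => (σ k)⁻¹)
    (fun k hk => absurd (Finset.mem_univ k) hk) diagT, hnorm, mul_one]
  have h4 : (∏ k, Equiv.Perm.sign (σ k)⁻¹) = ∏ k, Equiv.Perm.sign (σ k) :=
    Finset.prod_congr rfl fun k _ => Equiv.Perm.sign_inv (σ k)
  rw [h4]

end AuxHdetUnique

/-- For even `d`, the hyperdeterminant is the unique function on
`d`-tensors that is multilinear in each slice, skew-symmetric under swapping
parallel slices, and normalized on the diagonal identity tensor. -/
theorem hdet_unique [Field F] {d n : ℕ} [NeZero d] (hd : Even d)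
    (Δ : ((Fin d → Fin n) → F) → F)
    (hadd : ∀ (k : Fin d) (ℓ : Fin n) (T T' T'' : (Fin d → Fin n) → F),
      (∀ i, i k ≠ ℓ → T' i = T i) → (∀ i, i k ≠ ℓ → T'' i = T i) →
      (∀ i, i k = ℓ → T'' i = T i + T' i) → Δ T'' = Δ T + Δ T')
    (hsmul : ∀ (k : Fin d) (ℓ : Fin n) (c : F) (T T' : (Fin d → Fin n) → F),
      (∀ i, i k ≠ ℓ → T' i = T i) → (∀ i, i k = ℓ → T' i = c * T i) →
      Δ T' = c * Δ T)
    (hswap : ∀ (k : Fin d) (a b : Fin n), a ≠ b → ∀ T : (Fin d → Fin n) → F,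
      Δ (fun i => T (Function.update i k (Equiv.swap a b (i k)))) = - Δ T)
    (hnorm : Δ diagT = 1) :
    ∀ T : (Fin d → Fin n) → F, Δ T = hdet T := by
  classical
  intro T
  let κ := {k : Fin d // k ≠ (0 : Fin d)}
  let ι' : Fin n → (κ → Fin n) → (Fin d → Fin n) :=
    fun ℓ v k => if h : k = (0 : Fin d) then ℓ else v ⟨k, h⟩
  have hι : ∀ i : Fin d → Fin n, ι' (i 0) (fun k => i k.1) = i := by
    intro i; funext k
    by_cases h : k = 0
    · show (if h : k = (0 : Fin d) then i 0 else i (⟨k, h⟩ : κ).1) = i k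
      rw [dif_pos h, h]
    · show (if h : k = (0 : Fin d) then i 0 else i (⟨k, h⟩ : κ).1) = i k
      rw [dif_neg h]
  let D : MultilinearMap F (fun _ : Fin n => (κ → Fin n) → F) F :=
    { toFun := fun M => Δ (fun i => M (i 0) (fun k => i k.1))
      map_update_add' := by
        intro _ M ℓ x y
        refine hadd 0 ℓ _ _ _ ?_ ?_ ?_ <;> intro i hi
        · simp only [Function.update_of_ne hi]
        · simp only [Function.update_of_ne hi]
        · simp only [hi, Function.update_self, Pi.add_apply]
      map_update_smul' := by
        intro _ M ℓ c x
        rw [smul_eq_mul]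
        refine hsmul 0 ℓ c _ _ ?_ ?_ <;> intro i hi
        · simp only [Function.update_of_ne hi]
        · simp only [hi, Function.update_self, Pi.smul_apply, smul_eq_mul] }
  let e : (κ → Fin n) → ((κ → Fin n) → F) := fun j v => if v = j then (1 : F) else 0
  let E : (Fin n → (κ → Fin n)) → ((Fin d → Fin n) → F) :=
    fun g i => if (fun k : κ => i k.1) = g (i 0) then (1 : F) else 0
  have hexp : Δ T = ∑ g : Fin n → (κ → Fin n),
      (∏ ℓ, T (ι' ℓ (g ℓ))) * Δ (E g) := by
    have h1 : Δ T = D (fun ℓ v => T (ι' ℓ v)) := by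
      show Δ T = Δ (fun i => T (ι' (i 0) (fun k => i k.1)))
      congr 1
      funext i
      rw [hι i]
    have h2 : (fun ℓ v => T (ι' ℓ v)) = fun ℓ => ∑ j : κ → Fin n, T (ι' ℓ j) • e j := by
      funext ℓ v
      rw [Finset.sum_apply]
      simp only [e, Pi.smul_apply, smul_eq_mul, mul_ite, mul_one, mul_zero]
      rw [Finset.sum_ite_eq Finset.univ v (fun j => T (ι' ℓ j))]
      simp
    rw [h1, h2, D.map_sum]
    refine Finset.sum_congr rfl fun g _ => ?_
    rw [D.map_smul_univ, smul_eq_mul]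
    rfl
  have hbad : ∀ g : Fin n → (κ → Fin n),
      (¬ ∀ k : κ, Function.Bijective (fun ℓ => g ℓ k)) → Δ (E g) = 0 := by
    intro g hg
    push_neg at hg
    obtain ⟨k, hk⟩ := hg
    have hns : ¬ Function.Surjective (fun ℓ => g ℓ k) := fun hs =>
      hk (Finite.surjective_iff_bijective.mp hs)
    rw [Function.Surjective] at hns
    push_neg at hns
    obtain ⟨m, hm⟩ := hns
    refine auxU_zero Δ hsmul k.1 m (E g) ?_
    intro i hik
    show (if (fun k : κ => i k.1) = g (i 0) then (1 : F) else 0) = 0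
    rw [if_neg]
    intro hEq
    exact hm (i 0) ((congrFun hEq k).symm.trans hik)
  have hgood : ∀ g ∈ Finset.univ, ((∏ ℓ, T (ι' ℓ (g ℓ))) * Δ (E g) ≠ 0) →
      (∀ k : κ, Function.Bijective (fun ℓ => g ℓ k)) := by
    intro g _ hne
    by_contra hng
    exact hne (by rw [hbad g hng, mul_zero])
  rw [hexp, ← Finset.sum_filter_of_ne hgood, hdet, ← Finset.sum_filter]
  refine Finset.sum_bij'
    (i := fun g hg => fun k : Fin d => if h : k = 0 then 1 else
      Equiv.ofBijective (fun ℓ => g ℓ ⟨k, h⟩) ((Finset.mem_filter.mp hg).2 ⟨k, h⟩))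
    (j := fun σ _ => fun ℓ (k : κ) => σ k.1 ℓ) ?_ ?_ ?_ ?_ ?_
  · intro g hg
    exact Finset.mem_filter.mpr ⟨Finset.mem_univ _, dif_pos rfl⟩
  · intro σ hσ
    simp only [Finset.mem_filter, Finset.mem_univ, true_and]
    exact fun k => (σ k.1).bijective
  · intro g hg
    funext ℓ k
    show (if h : k.1 = 0 then 1 else
      Equiv.ofBijective (fun ℓ => g ℓ ⟨k.1, h⟩) ((Finset.mem_filter.mp hg).2 ⟨k.1, h⟩)) ℓ = g ℓ k
    rw [dif_neg k.2]
    rfl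
  · intro σ hσ
    funext k
    by_cases hk : k = 0
    · subst hk
      show (if h : (0 : Fin d) = 0 then 1 else _) = σ 0
      rw [dif_pos rfl, (Finset.mem_filter.mp hσ).2]
    · show (if h : k = 0 then 1 else
        Equiv.ofBijective (fun ℓ => σ (⟨k, h⟩ : κ).1 ℓ) _) = σ k
      rw [dif_neg hk]
      exact Equiv.ext fun ℓ => rfl
  · intro g hg
    set σ : Fin d → Equiv.Perm (Fin n) := fun k => if h : k = 0 then 1 else
      Equiv.ofBijective (fun ℓ => g ℓ ⟨k, h⟩) ((Finset.mem_filter.mp hg).2 ⟨k, h⟩) with hσdef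
    have hσ0 : σ 0 = 1 := dif_pos rfl
    have hσk : ∀ (k : κ) (ℓ : Fin n), σ k.1 ℓ = g ℓ k := by
      intro k ℓ
      show (if h : k.1 = 0 then 1 else
        Equiv.ofBijective (fun ℓ => g ℓ ⟨k.1, h⟩) ((Finset.mem_filter.mp hg).2 ⟨k.1, h⟩)) ℓ = g ℓ k
      rw [dif_neg k.2]
      rfl
    have hE : Δ (E g) = (((∏ k, Equiv.Perm.sign (σ k) : ℤˣ) : ℤ) : F) := by
      have : E g = fun i => if (fun k : κ => i k.1) = (fun k : κ => σ k.1 (i 0))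
          then (1 : F) else 0 := by
        funext i
        show (if (fun k : κ => i k.1) = g (i 0) then (1 : F) else 0) = _
        have : g (i 0) = fun k : κ => σ k.1 (i 0) := funext fun k => (hσk k (i 0)).symm
        rw [this]
      rw [this]
      exact auxU_diag Δ hswap hnorm σ hσ0
    have hcoe : ∀ ℓ, ι' ℓ (g ℓ) = fun k => σ k ℓ := by
      intro ℓ
      funext k
      by_cases hk : k = 0
      · subst hk
        show (if h : (0 : Fin d) = (0 : Fin d) then ℓ else g ℓ ⟨0, h⟩) = σ 0 ℓ
        rw [dif_pos rfl, hσ0]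
        rfl
      · show (if h : k = (0 : Fin d) then ℓ else g ℓ ⟨k, h⟩) = σ k ℓ
        rw [dif_neg hk, hσk ⟨k, hk⟩ ℓ]
    have hprod : (∏ ℓ, T (ι' ℓ (g ℓ))) = ∏ ℓ, T (fun k => σ k ℓ) :=
      Finset.prod_congr rfl fun ℓ _ => by rw [hcoe ℓ]
    rw [hE, hprod, mul_comm]
end

section
/- For odd d, there is no function Δ : T^d(n) → F (with n ≥ 2 and char F ≠ 2) that is skew-symmetric under swapping any two parallel slices in each direction and satisfies Δ(I) = 1 for the diagonal identity tensor I. -/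
open Finset

variable {F : Type*}

/-- For odd `d` (with `n ≥ 2` and characteristic of `F` not `2`),
no function on `d`-tensors is skew-symmetric under swapping parallel slices in
every direction and equal to `1` on the diagonal identity tensor. -/
theorem no_skew_symmetric_normalized_of_odd [Field F] {d n : ℕ} [NeZero d]
    (hd : Odd d) (hn : 2 ≤ n) (hF : (2 : F) ≠ 0) :
    ¬ ∃ Δ : ((Fin d → Fin n) → F) → F,
      (∀ (k : Fin d) (a b : Fin n), a ≠ b → ∀ T : (Fin d → Fin n) → F,
        Δ (fun i => T (Function.update i k (Equiv.swap a b (i k)))) = - Δ T) ∧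
      Δ diagT = 1 := by
  rintro ⟨Δ, hskew, hdiag⟩
  have h0 : (0 : ℕ) < n := by omega
  have h1 : (1 : ℕ) < n := by omega
  set a : Fin n := ⟨0, h0⟩
  set b : Fin n := ⟨1, h1⟩
  have hab : a ≠ b := by simp [a, b, Fin.ext_iff]
  set s : Equiv.Perm (Fin n) := Equiv.swap a b with hs
  set Tm : ℕ → ((Fin d → Fin n) → F) :=
    fun m i => diagT (fun ℓ => if (ℓ : ℕ) < m then s (i ℓ) else i ℓ) with hTm
  have key : ∀ m, m ≤ d → Δ (Tm m) = (-1 : F) ^ m := by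
    intro m
    induction m with
    | zero =>
      intro _
      have : Tm 0 = diagT := by
        funext i; simp [hTm]
      simp [this, hdiag]
    | succ m ih =>
      intro hm
      have hmd : m < d := by omega
      have step : (fun i => Tm m (Function.update i ⟨m, hmd⟩ (s (i ⟨m, hmd⟩))))
          = Tm (m + 1) := by
        funext i
        simp only [hTm]
        congr 1
        funext ℓ
        rcases eq_or_ne ℓ ⟨m, hmd⟩ with rfl | hne
        · simp [Function.update_self]
        · have hℓm : (ℓ : ℕ) ≠ m := fun h => hne (Fin.ext h)
          rcases lt_or_ge (ℓ : ℕ) m with h | h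
          · simp [Function.update_of_ne hne, h, Nat.lt_succ_of_lt h]
          · have h' : ¬ (ℓ : ℕ) < m := not_lt.mpr h
            have h'' : ¬ (ℓ : ℕ) < m + 1 := by omega
            simp [Function.update_of_ne hne, h', h'']
      have := hskew ⟨m, hmd⟩ a b hab (Tm m)
      rw [step] at this
      rw [this, ih (le_of_lt hmd)]
      ring
  have hTd : Tm d = diagT := by
    funext i
    have : (fun ℓ : Fin d => if (ℓ : ℕ) < d then s (i ℓ) else i ℓ)
        = fun ℓ => s (i ℓ) := by
      funext ℓ; simp [ℓ.isLt]
    show diagT (fun ℓ => if (ℓ : ℕ) < d then s (i ℓ) else i ℓ) = diagT i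
    rw [this]
    simp only [diagT]
    congr 1
    simp only [eq_iff_iff]
    constructor
    · intro h ℓ; exact s.injective (h ℓ)
    · intro h ℓ; rw [h ℓ]
  have hodd : (-1 : F) ^ d = -1 := Odd.neg_one_pow hd
  have : (1 : F) = -1 := by
    have h := key d le_rfl
    rw [hTd, hdiag, hodd] at h
    exact h
  apply hF
  linear_combination this
end

section
/- Cayley's invariance formula: for even d, T ∈ T^d(n), and n×n matrices A_1,...,A_d, det((A_1,...,A_d)·T) = det(A_1)···det(A_d)·det(T). In particular, the hyperdeterminant is SL(n)^d invariant. -/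
open Finset

variable {F : Type*}

section Lemmas
variable [CommRing F] {d n : ℕ}

lemma mprod_one (T : (Fin d → Fin n) → F) : mprod (fun _ => (1 : Matrix (Fin n) (Fin n) F)) T = T := by
  funext i
  unfold mprod
  rw [Finset.sum_eq_single i]
  · simp [Matrix.one_apply]
  · intro j _ hj
    have : ∃ ℓ, i ℓ ≠ j ℓ := by
      by_contra h
      push_neg at h
      exact hj (funext fun ℓ => (h ℓ).symm)
    obtain ⟨ℓ, hℓ⟩ := this
    rw [Finset.prod_eq_zero (Finset.mem_univ ℓ)]
    · ring
    · simp [Matrix.one_apply, hℓ]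
  · simp

lemma mprod_mul (A B : Fin d → Matrix (Fin n) (Fin n) F) (T : (Fin d → Fin n) → F) :
    mprod A (mprod B T) = mprod (fun ℓ => A ℓ * B ℓ) T := by
  funext i
  unfold mprod
  simp_rw [Matrix.mul_apply, Fintype.prod_sum, Finset.sum_mul, Finset.mul_sum,
    Finset.prod_mul_distrib, mul_assoc]
  rw [Finset.sum_comm]

end Lemmas
section Lemmas2
variable [CommRing F] {d n : ℕ} [NeZero d]

lemma units_pow_even (hd : Even d) (u : ℤˣ) : u ^ d = 1 := by
  obtain ⟨c, rfl⟩ := hd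
  rw [← two_mul, pow_mul, Int.units_sq, one_pow]

lemma hdet_eq (hd : Even d) (m : Fin d) (T : (Fin d → Fin n) → F) :
    hdet T = ∑ σ : Fin d → Equiv.Perm (Fin n),
      if σ m = 1 then
        ((((∏ ℓ, Equiv.Perm.sign (σ ℓ)) : ℤˣ) : ℤ) : F) * ∏ i, T (fun ℓ => σ ℓ i)
      else 0 := by
  rw [hdet, ← Finset.sum_filter, ← Finset.sum_filter]
  refine Finset.sum_nbij' (fun σ => fun ℓ => σ ℓ * (σ m)⁻¹)
    (fun σ => fun ℓ => σ ℓ * (σ 0)⁻¹) ?_ ?_ ?_ ?_ ?_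
  · intro σ hσ
    simp
  · intro σ hσ
    simp
  · intro σ hσ
    simp only [Finset.mem_filter] at hσ
    funext ℓ
    simp [hσ.2, mul_assoc]
  · intro σ hσ
    simp only [Finset.mem_filter] at hσ
    funext ℓ
    simp [hσ.2, mul_assoc]
  · intro σ hσ
    simp only [Finset.mem_filter] at hσ
    have hsgn : (∏ ℓ, Equiv.Perm.sign (σ ℓ * (σ m)⁻¹)) = ∏ ℓ, Equiv.Perm.sign (σ ℓ) := by
      simp only [map_mul, Finset.prod_mul_distrib, Finset.prod_const]
      rw [Equiv.Perm.sign_inv, Finset.card_univ, Fintype.card_fin, units_pow_even hd, mul_one]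
    have hprod : (∏ i, T (fun ℓ => (σ ℓ * (σ m)⁻¹) i)) = ∏ i, T (fun ℓ => σ ℓ i) := by
      calc (∏ i, T (fun ℓ => (σ ℓ * (σ m)⁻¹) i))
          = ∏ i, T (fun ℓ => σ ℓ ((σ m)⁻¹ i)) := rfl
        _ = ∏ i, T (fun ℓ => σ ℓ i) := Equiv.prod_comp ((σ m)⁻¹) (fun i => T (fun ℓ => σ ℓ i))
    rw [hsgn, hprod]

end Lemmas2
section Lemmas3
variable [CommRing F] {d n : ℕ}

lemma mprod_single (k : Fin d) (A : Matrix (Fin n) (Fin n) F) (T : (Fin d → Fin n) → F)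
    (i : Fin d → Fin n) :
    mprod (fun ℓ => if ℓ = k then A else 1) T i
      = ∑ x : Fin n, A (i k) x * T (Function.update i k x) := by
  rw [mprod]
  symm
  refine Fintype.sum_of_injective (fun x => Function.update i k x) ?_ _ _ ?_ ?_
  · intro x y hxy
    have := congrFun hxy k
    simpa using this
  · intro j hj
    have : ∃ ℓ, ℓ ≠ k ∧ j ℓ ≠ i ℓ := by
      by_contra h
      push_neg at h
      exact hj ⟨j k, funext fun ℓ => by
        rcases eq_or_ne ℓ k with rfl | hℓ
        · simp
        · simp [Function.update_apply, hℓ, h ℓ hℓ]⟩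
    obtain ⟨ℓ, hℓk, hℓ⟩ := this
    rw [Finset.prod_eq_zero (Finset.mem_univ ℓ)]
    · ring
    · simp [hℓk, Matrix.one_apply, (Ne.symm hℓ)]
  · intro x
    congr 1
    rw [Fintype.prod_eq_single k]
    · simp
    · intro ℓ hℓ
      simp [hℓ, Matrix.one_apply, Function.update_apply]

end Lemmas3
section Lemmas4
variable [CommRing F] {d n : ℕ}

open Equiv in
lemma sum_perm_decomp {m k : Fin d} (hmk : m ≠ k) (f : (Fin d → Equiv.Perm (Fin n)) → F) :
    ∑ σ : Fin d → Equiv.Perm (Fin n), (if σ m = 1 then f σ else 0)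
      = ∑ p : Equiv.Perm (Fin n) × (Fin d → Equiv.Perm (Fin n)),
          (if p.2 m = 1 ∧ p.2 k = 1 then f (Function.update p.2 k p.1) else 0) := by
  rw [← Finset.sum_filter, ← Finset.sum_filter]
  refine Finset.sum_nbij' (fun σ => (σ k, Function.update σ k 1))
    (fun p => Function.update p.2 k p.1) ?_ ?_ ?_ ?_ ?_
  · intro σ hσ
    simp only [Finset.mem_filter, Finset.mem_univ, true_and] at hσ ⊢
    exact ⟨by rw [Function.update_of_ne hmk, hσ], Function.update_self _ _ _⟩
  · intro p hp
    simp only [Finset.mem_filter, Finset.mem_univ, true_and] at hp ⊢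
    rw [Function.update_of_ne hmk, hp.1]
  · intro σ hσ
    simp only
    rw [Function.update_idem, Function.update_eq_self_iff]
  · intro p hp
    simp only [Finset.mem_filter, Finset.mem_univ, true_and] at hp
    have h2 : Function.update p.2 k 1 = p.2 := Function.update_eq_self_iff.mpr hp.2.symm
    simp [Function.update_idem, h2]
  · intro σ hσ
    simp only
    rw [Function.update_idem, Function.update_eq_self]

lemma sign_update {τ : Fin d → Equiv.Perm (Fin n)} {k : Fin d} (hτ : τ k = 1)
    (π : Equiv.Perm (Fin n)) :
    (∏ ℓ, Equiv.Perm.sign (Function.update τ k π ℓ))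
      = Equiv.Perm.sign π * ∏ ℓ, Equiv.Perm.sign (τ ℓ) := by
  have h1 : ∀ ℓ, Equiv.Perm.sign (Function.update τ k π ℓ)
      = Function.update (fun ℓ => Equiv.Perm.sign (τ ℓ)) k (Equiv.Perm.sign π) ℓ := by
    intro ℓ
    rcases eq_or_ne ℓ k with rfl | hℓ
    · simp
    · simp [hℓ]
  rw [Finset.prod_congr rfl (fun ℓ _ => h1 ℓ),
    Finset.prod_update_of_mem (Finset.mem_univ k)]
  congr 1
  rw [Finset.prod_eq_mul_prod_sdiff_singleton_of_mem (Finset.mem_univ k)]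
  simp [hτ]

lemma update_comm_pointwise {τ : Fin d → Equiv.Perm (Fin n)} {k : Fin d}
    (π : Equiv.Perm (Fin n)) (i : Fin n) (x : Fin n) :
    Function.update (fun ℓ => Function.update τ k π ℓ i) k x
      = Function.update (fun ℓ => τ ℓ i) k x := by
  funext ℓ
  rcases eq_or_ne ℓ k with rfl | hℓ
  · simp
  · simp [Function.update_apply, hℓ]

lemma sum_fun_eq_sum_perm (A : Matrix (Fin n) (Fin n) F) (C : (Fin n → Fin n) → F) :
    ∑ g : Fin n → Fin n, (A.submatrix id g).det * C g
      = ∑ ρ : Equiv.Perm (Fin n), ((Equiv.Perm.sign ρ : ℤ) : F) * A.det * C ⇑ρ := by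
  symm
  refine Fintype.sum_of_injective (fun ρ : Equiv.Perm (Fin n) => ⇑ρ)
    (fun ρ₁ ρ₂ h => Equiv.coe_fn_injective h) _ _ ?_ ?_
  · intro g hg
    have hnb : ¬ Function.Bijective g := by
      intro hb
      exact hg ⟨Equiv.ofBijective g hb, rfl⟩
    have : ∃ a b, a ≠ b ∧ g a = g b := by
      rw [← Finite.injective_iff_bijective] at hnb
      simp only [Function.Injective] at hnb
      push_neg at hnb
      obtain ⟨a, b, hab, hne⟩ := hnb
      exact ⟨a, b, hne, hab⟩
    obtain ⟨a, b, hab, hgab⟩ := this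
    rw [Matrix.det_zero_of_column_eq hab (fun i => by simp [hgab])]
    ring
  · intro ρ
    rw [Matrix.det_permute' ρ A]

end Lemmas4
section Lemmas5
variable [CommRing F] {d n : ℕ}

lemma update_pointwise (τ : Fin d → Equiv.Perm (Fin n)) (k : Fin d)
    (π : Equiv.Perm (Fin n)) (i : Fin n) :
    (fun ℓ => Function.update τ k π ℓ i) = Function.update (fun ℓ => τ ℓ i) k (π i) := by
  funext ℓ
  rcases eq_or_ne ℓ k with rfl | hℓ
  · simp
  · simp [Function.update_apply, hℓ]

lemma hdet_mprod_single [NeZero d] (hd : Even d) (k : Fin d) (A : Matrix (Fin n) (Fin n) F)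
    (T : (Fin d → Fin n) → F) :
    hdet (mprod (fun ℓ => if ℓ = k then A else 1) T) = A.det * hdet T := by
  classical
  have hd1 : 1 < d := by
    obtain ⟨c, hc⟩ := hd
    have h0 := Nat.pos_of_ne_zero (NeZero.ne d)
    omega
  obtain ⟨m, hmk⟩ := Fintype.exists_ne_of_one_lt_card (by simpa using hd1) k
  rw [hdet_eq hd m, hdet_eq hd m, sum_perm_decomp hmk, sum_perm_decomp hmk,
    Fintype.sum_prod_type, Fintype.sum_prod_type, Finset.mul_sum]
  have hprod : ∀ (τ : Fin d → Equiv.Perm (Fin n)) (π : Equiv.Perm (Fin n)),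
      (∏ i, mprod (fun ℓ => if ℓ = k then A else 1) T
          (fun ℓ => Function.update τ k π ℓ i))
        = ∑ g : Fin n → Fin n,
            (∏ i, A (π i) (g i)) * ∏ i, T (Function.update (fun ℓ => τ ℓ i) k (g i)) := by
    intro τ π
    have h1 : ∀ i : Fin n, mprod (fun ℓ => if ℓ = k then A else 1) T
        (fun ℓ => Function.update τ k π ℓ i)
        = ∑ x, A (π i) x * T (Function.update (fun ℓ => τ ℓ i) k x) := by
      intro i
      rw [mprod_single]
      simp only [update_pointwise, Function.update_self, Function.update_idem]
    rw [Finset.prod_congr rfl (fun i _ => h1 i), Fintype.prod_sum]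
    exact Finset.sum_congr rfl fun g _ => Finset.prod_mul_distrib
  trans (∑ τ : Fin d → Equiv.Perm (Fin n), if τ m = 1 ∧ τ k = 1 then
      ((((∏ ℓ, Equiv.Perm.sign (τ ℓ)) : ℤˣ) : ℤ) : F) *
        ∑ g : Fin n → Fin n, (A.submatrix id g).det *
          ∏ i, T (Function.update (fun ℓ => τ ℓ i) k (g i)) else 0)
  · rw [Finset.sum_comm]
    refine Finset.sum_congr rfl fun τ _ => ?_
    by_cases hc : τ m = 1 ∧ τ k = 1
    · simp only [if_pos hc]
      calc ∑ π : Equiv.Perm (Fin n),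
            ((((∏ ℓ, Equiv.Perm.sign (Function.update τ k π ℓ)) : ℤˣ) : ℤ) : F) *
              ∏ i, mprod (fun ℓ => if ℓ = k then A else 1) T
                (fun ℓ => Function.update τ k π ℓ i)
          = ∑ π : Equiv.Perm (Fin n), ∑ g : Fin n → Fin n,
              ((((Equiv.Perm.sign π : ℤˣ) : ℤ) : F) * ∏ i, A (π i) (g i)) *
                (((((∏ ℓ, Equiv.Perm.sign (τ ℓ)) : ℤˣ) : ℤ) : F) *
                  ∏ i, T (Function.update (fun ℓ => τ ℓ i) k (g i))) := by
            refine Finset.sum_congr rfl fun π _ => ?_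
            rw [hprod τ π, sign_update hc.2, Finset.mul_sum]
            refine Finset.sum_congr rfl fun g _ => ?_
            push_cast
            ring
        _ = ∑ g : Fin n → Fin n,
              (∑ π : Equiv.Perm (Fin n),
                (((Equiv.Perm.sign π : ℤˣ) : ℤ) : F) * ∏ i, A (π i) (g i)) *
                (((((∏ ℓ, Equiv.Perm.sign (τ ℓ)) : ℤˣ) : ℤ) : F) *
                  ∏ i, T (Function.update (fun ℓ => τ ℓ i) k (g i))) := by
            rw [Finset.sum_comm]
            exact Finset.sum_congr rfl fun g _ => (Finset.sum_mul _ _ _).symm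
        _ = ((((∏ ℓ, Equiv.Perm.sign (τ ℓ)) : ℤˣ) : ℤ) : F) *
              ∑ g : Fin n → Fin n, (A.submatrix id g).det *
                ∏ i, T (Function.update (fun ℓ => τ ℓ i) k (g i)) := by
            rw [Finset.mul_sum]
            refine Finset.sum_congr rfl fun g _ => ?_
            rw [Matrix.det_apply']
            simp only [Matrix.submatrix_apply, id]
            ring
    · simp [hc]
  · simp_rw [Finset.mul_sum]
    rw [Finset.sum_comm]
    refine Finset.sum_congr rfl fun τ _ => ?_
    by_cases hc : τ m = 1 ∧ τ k = 1
    · simp only [if_pos hc]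
      rw [← Finset.mul_sum, sum_fun_eq_sum_perm, Finset.mul_sum]
      refine Finset.sum_congr rfl fun ρ _ => ?_
      have h2 : (∏ i, T (fun ℓ => Function.update τ k ρ ℓ i))
          = ∏ i, T (Function.update (fun ℓ => τ ℓ i) k (ρ i)) := by
        exact Finset.prod_congr rfl fun i _ => by rw [update_pointwise]
      rw [sign_update hc.2, h2]
      push_cast
      ring
    · simp [hc]

end Lemmas5
section Lemmas6
variable [CommRing F] {d n : ℕ}

lemma hdet_mprod_subset [NeZero d] (hd : Even d) (A : Fin d → Matrix (Fin n) (Fin n) F)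
    (T : (Fin d → Fin n) → F) (s : Finset (Fin d)) :
    hdet (mprod (fun ℓ => if ℓ ∈ s then A ℓ else 1) T) = (∏ ℓ ∈ s, (A ℓ).det) * hdet T := by
  classical
  induction s using Finset.induction with
  | empty => simp [mprod_one]
  | @insert k s hk ih =>
    have hsplit : (fun ℓ => if ℓ ∈ insert k s then A ℓ else 1)
        = fun ℓ => (if ℓ = k then A k else 1) * (if ℓ ∈ s then A ℓ else 1) := by
      funext ℓ
      rcases eq_or_ne ℓ k with rfl | hℓ
      · simp [hk]
      · by_cases hs : ℓ ∈ s <;> simp [hℓ, hs]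
    rw [hsplit, ← mprod_mul, hdet_mprod_single hd k (A k), ih,
      Finset.prod_insert hk, mul_assoc]

end Lemmas6
/-- Cayley's invariance formula for even `d`. -/
theorem hdet_mprod [Field F] {d n : ℕ} [NeZero d] (hd : Even d)
    (A : Fin d → Matrix (Fin n) (Fin n) F) (T : (Fin d → Fin n) → F) :
    hdet (mprod A T) = (∏ ℓ, (A ℓ).det) * hdet T := by
  have h := hdet_mprod_subset hd A T Finset.univ
  simpa using h
end

section
/- Hyperdeterminant of diagonal-equivalent tensors: for even d and n×n matrices A_1,...,A_d, the tensor T(i_1,...,i_d) = Σ_{ℓ=1}^n A_1(i_1,ℓ)···A_d(i_d,ℓ) satisfies det(T) = det(A_1)···det(A_d). -/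
open Finset

variable {F : Type*}

/-- hyperdeterminant of diagonal-equivalent tensors. -/
theorem hdet_diagonal_equivalent [Field F] {d n : ℕ} [NeZero d] (hd : Even d)
    (A : Fin d → Matrix (Fin n) (Fin n) F) :
    hdet (fun i : Fin d → Fin n => ∑ ℓ : Fin n, ∏ m : Fin d, A m (i m) ℓ) =
      ∏ m, (A m).det := by
  classical
  have hd1 : 1 ≤ d := Nat.one_le_iff_ne_zero.2 (NeZero.ne d)
  have hd2 : 2 ≤ d := by
    rcases hd with ⟨k, hk⟩
    have := NeZero.ne d
    omega
  have hodd : Odd (d - 1) := Nat.Even.sub_odd hd1 hd odd_one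
  have hsgn : ∀ σ : Equiv.Perm (Fin n),
      (((Equiv.Perm.sign σ : ℤ) : F)) ^ (d - 1) = ((Equiv.Perm.sign σ : ℤ) : F) := by
    intro σ
    rcases Int.units_eq_one_or (Equiv.Perm.sign σ) with h | h <;> rw [h]
    · norm_num
    · push_cast
      rw [hodd.neg_one_pow]
  set E := (Finset.univ : Finset (Fin d)).erase 0 with hE
  have key : ∀ f : Fin n → Fin n,
      (∑ σ : Fin d → Equiv.Perm (Fin n),
        if σ 0 = 1 then
          ((((∏ ℓ, Equiv.Perm.sign (σ ℓ)) : ℤˣ) : ℤ) : F) *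
            ∏ i, ∏ m, A m (σ m i) (f i)
        else 0) =
      (∏ i, A 0 i (f i)) * ∏ m ∈ E, ((A m).submatrix id f).det := by
    intro f
    set G : Fin d → Equiv.Perm (Fin n) → F := fun m π =>
      if m = 0 then (if π = 1 then ∏ i, A m (π i) (f i) else 0)
      else ((Equiv.Perm.sign π : ℤ) : F) * ∏ i, A m (π i) (f i) with hGdef
    have h1 : ∀ σ : Fin d → Equiv.Perm (Fin n),
        (if σ 0 = 1 then
          ((((∏ ℓ, Equiv.Perm.sign (σ ℓ)) : ℤˣ) : ℤ) : F) *
            ∏ i, ∏ m, A m (σ m i) (f i)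
        else 0) = ∏ m, G m (σ m) := by
      intro σ
      by_cases h0 : σ 0 = 1
      · rw [if_pos h0, Finset.prod_comm]
        have hc : ((((∏ ℓ, Equiv.Perm.sign (σ ℓ)) : ℤˣ) : ℤ) : F)
            = ∏ m, ((Equiv.Perm.sign (σ m) : ℤ) : F) := by
          push_cast
          rfl
        rw [hc, ← Finset.prod_mul_distrib]
        refine Finset.prod_congr rfl fun m _ => ?_
        by_cases hm : m = 0
        · subst hm
          simp [hGdef, h0]
        · simp [hGdef, hm]
      · rw [if_neg h0]
        refine (Finset.prod_eq_zero (Finset.mem_univ 0) ?_).symm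
        simp [hGdef, h0]
    rw [Finset.sum_congr rfl fun σ _ => h1 σ]
    rw [show (Finset.univ : Finset (Fin d → Equiv.Perm (Fin n)))
        = Fintype.piFinset (fun _ => Finset.univ) from (Fintype.piFinset_univ).symm,
      ← Finset.prod_univ_sum]
    rw [← Finset.mul_prod_erase Finset.univ _ (Finset.mem_univ (0 : Fin d))]
    congr 1
    · simp [hGdef, Finset.sum_ite_eq']
    · refine Finset.prod_congr rfl fun m hm => ?_
      have hm0 : m ≠ 0 := (Finset.mem_erase.1 hm).1
      rw [Matrix.det_apply']
      refine (Finset.sum_congr rfl fun π _ => ?_).symm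
      simp [hGdef, hm0, Matrix.submatrix_apply]
  calc hdet (fun i : Fin d → Fin n => ∑ ℓ : Fin n, ∏ m : Fin d, A m (i m) ℓ)
      = ∑ σ : Fin d → Equiv.Perm (Fin n), ∑ f : Fin n → Fin n,
          (if σ 0 = 1 then
            ((((∏ ℓ, Equiv.Perm.sign (σ ℓ)) : ℤˣ) : ℤ) : F) *
              ∏ i, ∏ m, A m (σ m i) (f i)
          else 0) := by
        unfold hdet
        refine Finset.sum_congr rfl fun σ _ => ?_
        by_cases h0 : σ 0 = 1
        · simp only [if_pos h0, Finset.prod_univ_sum, Fintype.piFinset_univ,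
            Finset.mul_sum]
        · simp [h0]
    _ = ∑ f : Fin n → Fin n, ∑ σ : Fin d → Equiv.Perm (Fin n),
          (if σ 0 = 1 then
            ((((∏ ℓ, Equiv.Perm.sign (σ ℓ)) : ℤˣ) : ℤ) : F) *
              ∏ i, ∏ m, A m (σ m i) (f i)
          else 0) := Finset.sum_comm
    _ = ∑ f : Fin n → Fin n, (∏ i, A 0 i (f i)) * ∏ m ∈ E, ((A m).submatrix id f).det :=
        Finset.sum_congr rfl fun f _ => key f
    _ = ∑ f ∈ Finset.univ.filter Function.Bijective,
          (∏ i, A 0 i (f i)) * ∏ m ∈ E, ((A m).submatrix id f).det := by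
        refine (Finset.sum_subset (Finset.filter_subset _ _) fun f _ hbij => ?_).symm
        have hinj : ¬ Function.Injective f := by
          intro hinj
          exact hbij (Finset.mem_filter.2 ⟨Finset.mem_univ _,
            Finite.injective_iff_bijective.1 hinj⟩)
        obtain ⟨a, b, hab, hne⟩ := Function.not_injective_iff.1 hinj
        have hm₁ : (⟨1, by omega⟩ : Fin d) ∈ E :=
          Finset.mem_erase.2 ⟨by simp [Fin.ext_iff], Finset.mem_univ _⟩
        refine mul_eq_zero_of_right _ (Finset.prod_eq_zero hm₁ ?_)
        exact Matrix.det_zero_of_column_eq hne fun k => by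
          simp [Matrix.submatrix_apply, hab]
    _ = ∑ σ : Equiv.Perm (Fin n),
          (∏ i, A 0 i (σ i)) * ∏ m ∈ E, ((A m).submatrix id σ).det :=
        Finset.sum_bij (fun p h => Equiv.ofBijective p (Finset.mem_filter.1 h).2)
          (fun _ _ => Finset.mem_univ _)
          (fun _ _ _ _ h => by injection h)
          (fun b _ => ⟨b, Finset.mem_filter.2 ⟨Finset.mem_univ _, b.bijective⟩,
            Equiv.coe_fn_injective rfl⟩)
          fun _ _ => rfl
    _ = ∑ σ : Equiv.Perm (Fin n),
          ((Equiv.Perm.sign σ : ℤ) : F) * (∏ i, A 0 i (σ i)) * ∏ m ∈ E, (A m).det := by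
        refine Finset.sum_congr rfl fun σ _ => ?_
        have hperm : ∀ m : Fin d, ((A m).submatrix id σ).det
            = ((Equiv.Perm.sign σ : ℤ) : F) * (A m).det := fun m => by
          rw [Matrix.det_permute']
        rw [Finset.prod_congr rfl fun m _ => hperm m, Finset.prod_mul_distrib,
          Finset.prod_const]
        have hcard : E.card = d - 1 := by
          simp [hE, Finset.card_erase_of_mem]
        rw [hcard, hsgn σ]
        ring
    _ = (A 0).det * ∏ m ∈ E, (A m).det := by
        rw [← Finset.sum_mul]
        congr 1
        rw [← Matrix.det_transpose (A 0), Matrix.det_apply']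
        exact Finset.sum_congr rfl fun σ _ => by simp [Matrix.transpose_apply]
    _ = ∏ m, (A m).det :=
        Finset.mul_prod_erase Finset.univ (fun m => (A m).det) (Finset.mem_univ (0 : Fin d))
end

section
/- Minor summation formula: for even d and X, Y ∈ T^d(n), det(X + Y) = Σ_{k=0}^n Σ_{I_1,...,I_d ∈ C([n],k)} ε_{I_1,...,I_d} det(X_{I_1,...,I_d}) det(Y_{Ī_1,...,Ī_d}), where ε_{I_1,...,I_d} = sgn(π_{I_1}···π_{I_d}) with π_I the permutation listing I in increasing order followed by its complement in increasing order. -/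
open Finset

variable {F : Type*}

/-- The permutation `π_I` listing the elements of `I` in increasing order
followed by the elements of its complement in increasing order. -/
noncomputable def piPerm {n : ℕ} (I : Finset (Fin n)) : Equiv.Perm (Fin n) :=
  (((finCongr (by simp [Finset.card_add_card_compl] :
        I.card + Iᶜ.card = n)).symm.trans finSumFinEquiv.symm).trans
    ((Equiv.sumCongr (I.orderIsoOfFin rfl).toEquiv
      ((Iᶜ.orderIsoOfFin rfl).toEquiv.trans
        (Equiv.subtypeEquivRight (fun x => by simp)))).trans
      (Equiv.sumCompl (· ∈ I))))

section Aux
open Equiv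

/-- Block-diagonal permutation of `Fin n` from perms of `Fin k` and `Fin m`. -/
noncomputable def blk {n k m : ℕ} (h : k + m = n) (τ : Equiv.Perm (Fin k))
    (ρ : Equiv.Perm (Fin m)) : Equiv.Perm (Fin n) :=
  (finSumFinEquiv.trans (finCongr h)).permCongr (Equiv.sumCongr τ ρ)

lemma blk_apply_lt {n k m : ℕ} (h : k + m = n) (τ : Equiv.Perm (Fin k))
    (ρ : Equiv.Perm (Fin m)) (x : Fin n) (hx : x.val < k) :
    blk h τ ρ x = ⟨τ ⟨x.val, hx⟩, by omega⟩ := by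
  have h1 : (finCongr h).symm x = Fin.castAdd m ⟨x.val, hx⟩ := by
    ext; rfl
  simp only [blk, Equiv.permCongr_apply, Equiv.symm_trans_apply, h1,
    finSumFinEquiv_symm_apply_castAdd, Equiv.sumCongr_apply, Sum.map_inl,
    Equiv.trans_apply, finSumFinEquiv_apply_left]
  ext; simp

lemma blk_apply_ge {n k m : ℕ} (h : k + m = n) (τ : Equiv.Perm (Fin k))
    (ρ : Equiv.Perm (Fin m)) (x : Fin n) (hx : k ≤ x.val) :
    blk h τ ρ x = ⟨k + ρ ⟨x.val - k, by omega⟩, by omega⟩ := by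
  have h1 : (finCongr h).symm x = Fin.natAdd k ⟨x.val - k, by omega⟩ := by
    ext; simp; omega
  simp only [blk, Equiv.permCongr_apply, Equiv.symm_trans_apply, h1,
    finSumFinEquiv_symm_apply_natAdd, Equiv.sumCongr_apply, Sum.map_inr,
    Equiv.trans_apply, finSumFinEquiv_apply_right]
  ext; simp

lemma blk_one {n k m : ℕ} (h : k + m = n) : blk h (1 : Equiv.Perm (Fin k)) 1 = 1 := by
  ext x
  simp [blk, Equiv.Perm.sumCongr_one, Equiv.permCongr_apply]

lemma blk_inj {n k m : ℕ} (h : k + m = n) {τ τ' : Equiv.Perm (Fin k)}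
    {ρ ρ' : Equiv.Perm (Fin m)} (he : blk h τ ρ = blk h τ' ρ') : τ = τ' ∧ ρ = ρ' := by
  have h2 : Equiv.sumCongr τ ρ = Equiv.sumCongr τ' ρ' :=
    (finSumFinEquiv.trans (finCongr h)).permCongr.injective he
  constructor
  · refine Equiv.ext fun x => ?_
    have := congrFun (congrArg (fun (e : Equiv.Perm _) => (e : Fin k ⊕ Fin m → Fin k ⊕ Fin m))
      h2) (Sum.inl x)
    simpa using this
  · refine Equiv.ext fun x => ?_
    have := congrFun (congrArg (fun (e : Equiv.Perm _) => (e : Fin k ⊕ Fin m → Fin k ⊕ Fin m))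
      h2) (Sum.inr x)
    simpa using this

lemma sign_blk {n k m : ℕ} (h : k + m = n) (τ : Equiv.Perm (Fin k)) (ρ : Equiv.Perm (Fin m)) :
    Equiv.Perm.sign (blk h τ ρ) = Equiv.Perm.sign τ * Equiv.Perm.sign ρ := by
  simp [blk, Equiv.Perm.sign_permCongr, Equiv.Perm.sign_sumCongr]

lemma exists_blk {n k m : ℕ} (h : k + m = n) (π : Equiv.Perm (Fin n))
    (hπ : ∀ x : Fin n, x.val < k → (π x).val < k) :
    ∃ τ ρ, π = blk h τ ρ := by
  set e := finSumFinEquiv.trans (finCongr h) with he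
  have hmem : (e.permCongr.symm π) ∈ (Equiv.Perm.sumCongrHom (Fin k) (Fin m)).range := by
    apply Equiv.Perm.mem_sumCongrHom_range_of_perm_mapsTo_inl
    rintro x ⟨a, rfl⟩
    have h1 : (e (Sum.inl a)).val = a.val := by simp [he]
    have h2 : (π (e (Sum.inl a))).val < k := hπ _ (by rw [h1]; exact a.isLt)
    refine ⟨⟨(π (e (Sum.inl a))).val, h2⟩, ?_⟩
    have h5 : e.symm (π (e (Sum.inl a))) = Sum.inl ⟨(π (e (Sum.inl a))).val, h2⟩ := by
      rw [Equiv.symm_apply_eq]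
      ext; simp [he]
    simp [Equiv.permCongr_apply, h5]
  obtain ⟨⟨τ, ρ⟩, hτρ⟩ := hmem
  refine ⟨τ, ρ, ?_⟩
  have h5 : Equiv.sumCongr τ ρ = e.permCongr.symm π := hτρ
  have h4 : blk h τ ρ = e.permCongr (Equiv.sumCongr τ ρ) := rfl
  rw [h4, h5, Equiv.apply_symm_apply]

lemma orderIsoOfFin_cast {α : Type*} [LinearOrder α] (s : Finset α) {k : ℕ} (h : s.card = k)
    (j : Fin k) : (s.orderIsoOfFin h j : α) = s.orderIsoOfFin rfl (Fin.cast h.symm j) := by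
  subst h; rfl

lemma piPerm_inl {n : ℕ} (I : Finset (Fin n)) (hc : I.card + Iᶜ.card = n) (j : Fin I.card) :
    piPerm I (finCongr hc (finSumFinEquiv (Sum.inl j))) = ↑(I.orderIsoOfFin rfl j) := by
  simp [piPerm]

lemma piPerm_inr {n : ℕ} (I : Finset (Fin n)) (hc : I.card + Iᶜ.card = n) (j : Fin Iᶜ.card) :
    piPerm I (finCongr hc (finSumFinEquiv (Sum.inr j))) = ↑(Iᶜ.orderIsoOfFin rfl j) := by
  simp [piPerm]

lemma piPerm_apply_lt {n k : ℕ} (I : Finset (Fin n)) (h : I.card = k) (x : Fin n)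
    (hx : x.val < k) : piPerm I x = ↑(I.orderIsoOfFin h ⟨x.val, hx⟩) := by
  subst h
  have hc : I.card + Iᶜ.card = n := by simp [Finset.card_add_card_compl]
  have hx' : x = finCongr hc (finSumFinEquiv (Sum.inl (⟨x.val, hx⟩ : Fin I.card))) := by
    ext; simp
  conv_lhs => rw [hx']
  rw [piPerm_inl I hc]

lemma piPerm_apply_ge {n k : ℕ} (I : Finset (Fin n)) (h : I.card = k) (h' : Iᶜ.card = n - k)
    (x : Fin n) (hx : k ≤ x.val) :
    piPerm I x = ↑(Iᶜ.orderIsoOfFin h' ⟨x.val - k, by omega⟩) := by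
  subst h
  have hc : I.card + Iᶜ.card = n := by simp [Finset.card_add_card_compl]
  have hx' : x = finCongr hc (finSumFinEquiv (Sum.inr
      (⟨x.val - I.card, by omega⟩ : Fin Iᶜ.card))) := by
    ext; simp; omega
  conv_lhs => rw [hx']
  rw [piPerm_inr I hc, orderIsoOfFin_cast Iᶜ h']
  rfl

lemma prod_orderIsoOfFin' {M : Type*} [CommMonoid M] {α : Type*} [LinearOrder α]
    (s : Finset α) {k : ℕ} (h : s.card = k) (f : α → M) :
    ∏ j : Fin k, f (s.orderIsoOfFin h j) = ∏ i ∈ s, f i := by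
  rw [← Finset.prod_coe_sort s f]
  exact (s.orderIsoOfFin h).toEquiv.prod_comp (fun i => f (i : α))

lemma key [CommRing F] {d n k : ℕ} [NeZero d] (hd : Even d)
    (X Y : (Fin d → Fin n) → F) (I : Fin d → Finset (Fin n))
    (h : ∀ ℓ, (I ℓ).card = k) :
    (∑ σ : Fin d → Equiv.Perm (Fin n),
      if σ 0 = 1 ∧ ∀ ℓ, (I 0).image (σ ℓ) = I ℓ then
        ((((∏ ℓ, Equiv.Perm.sign (σ ℓ)) : ℤˣ) : ℤ) : F) *
          ((∏ i ∈ I 0, X fun ℓ => σ ℓ i) * ∏ i ∈ (I 0)ᶜ, Y fun ℓ => σ ℓ i)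
      else 0) =
    ((((∏ ℓ, Equiv.Perm.sign (piPerm (I ℓ))) : ℤˣ) : ℤ) : F) *
      hdet (fun j : Fin d → Fin k =>
        X fun ℓ => ((I ℓ).orderIsoOfFin (h ℓ) (j ℓ) : Fin n)) *
      hdet (fun j : Fin d → Fin (n - k) =>
        Y fun ℓ => ((I ℓ)ᶜ.orderIsoOfFin
          (by simp [Finset.card_compl, h ℓ]) (j ℓ) : Fin n)) := by
  classical
  have hk : k ≤ n := by
    have := Finset.card_le_univ (I 0)
    simpa [h 0] using this
  have hkm : k + (n - k) = n := by omega
  have hcc : ∀ ℓ, (I ℓ)ᶜ.card = n - k := fun ℓ => by simp [Finset.card_compl, h ℓ]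
  set P0 := piPerm (I 0) with hP0
  set Φ : (Fin d → Equiv.Perm (Fin k)) × (Fin d → Equiv.Perm (Fin (n - k))) →
      (Fin d → Equiv.Perm (Fin n)) :=
    fun p => fun ℓ => piPerm (I ℓ) * blk hkm (p.1 ℓ) (p.2 ℓ) * P0⁻¹ with hΦ
  -- (C1)
  have C1 : ∀ (p : (Fin d → Equiv.Perm (Fin k)) × (Fin d → Equiv.Perm (Fin (n - k))))
      (ℓ : Fin d) (j : Fin k),
      Φ p ℓ (((I 0).orderIsoOfFin (h 0) j : Fin n)) =
        ((I ℓ).orderIsoOfFin (h ℓ) (p.1 ℓ j) : Fin n) := by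
    intro p ℓ j
    have hj : ((I 0).orderIsoOfFin (h 0) j : Fin n) = P0 ⟨j.val, j.isLt.trans_le hk⟩ := by
      rw [hP0, piPerm_apply_lt (I 0) (h 0) _ j.isLt]
    show (piPerm (I ℓ) * blk hkm (p.1 ℓ) (p.2 ℓ) * P0⁻¹) _ = _
    rw [hj]
    simp only [Equiv.Perm.mul_apply, Equiv.Perm.inv_def, Equiv.symm_apply_apply]
    rw [blk_apply_lt hkm _ _ _ j.isLt]
    rw [piPerm_apply_lt (I ℓ) (h ℓ) _ ((p.1 ℓ ⟨j.val, j.isLt⟩).isLt)]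
  -- (C2)
  have ordc_eq : ∀ (s : Finset (Fin n)) (hs : s.card = n - k) (a b : Fin (n - k)),
      a.val = b.val → ((s.orderIsoOfFin hs a : Fin n)) = ↑(s.orderIsoOfFin hs b) := by
    intro s hs a b hab
    rw [show a = b from Fin.ext hab]
  have C2 : ∀ (p : (Fin d → Equiv.Perm (Fin k)) × (Fin d → Equiv.Perm (Fin (n - k))))
      (ℓ : Fin d) (j : Fin (n - k)),
      Φ p ℓ (((I 0)ᶜ.orderIsoOfFin (hcc 0) j : Fin n)) =
        ((I ℓ)ᶜ.orderIsoOfFin (hcc ℓ) (p.2 ℓ j) : Fin n) := by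
    intro p ℓ j
    have h1 : P0 (⟨k + j.val, by omega⟩ : Fin n) = ↑((I 0)ᶜ.orderIsoOfFin (hcc 0) j) := by
      rw [hP0, piPerm_apply_ge (I 0) (h 0) (hcc 0) _ (by simp)]
      exact ordc_eq _ _ _ _ (by simp)
    show (piPerm (I ℓ) * blk hkm (p.1 ℓ) (p.2 ℓ) * P0⁻¹) _ = _
    rw [← h1]
    simp only [Equiv.Perm.mul_apply, Equiv.Perm.inv_def, Equiv.symm_apply_apply]
    rw [blk_apply_ge hkm _ _ _ (by simp), piPerm_apply_ge (I ℓ) (h ℓ) (hcc ℓ) _ (by simp)]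
    apply ordc_eq
    have e0 : (⟨k + j.val - k, by omega⟩ : Fin (n - k)) = j := Fin.ext (by simp)
    have e1 := congrArg (fun z => (p.2 ℓ z).val) e0
    simp only [e1]
    omega
  -- (C3) membership
  have C3 : ∀ p : (Fin d → Equiv.Perm (Fin k)) × (Fin d → Equiv.Perm (Fin (n - k))),
      (p.1 0 = 1 ∧ p.2 0 = 1) →
      (Φ p 0 = 1 ∧ ∀ ℓ, (I 0).image (Φ p ℓ) = I ℓ) := by
    intro p hp
    constructor
    · show piPerm (I 0) * blk hkm (p.1 0) (p.2 0) * P0⁻¹ = 1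
      rw [hp.1, hp.2, blk_one, hP0]
      group
    · intro ℓ
      apply Finset.eq_of_subset_of_card_le
      · intro y hy
        obtain ⟨i, hi, rfl⟩ := Finset.mem_image.mp hy
        obtain ⟨j, rfl⟩ : ∃ j : Fin k, ((I 0).orderIsoOfFin (h 0) j : Fin n) = i :=
          ⟨((I 0).orderIsoOfFin (h 0)).symm ⟨i, hi⟩, by simp⟩
        rw [C1 p ℓ j]
        exact (((I ℓ).orderIsoOfFin (h ℓ)) (p.1 ℓ j)).2
      · rw [Finset.card_image_of_injective _ (Equiv.injective _), h 0, h ℓ]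
  -- (C4) injectivity
  have C4 : ∀ p p', Φ p = Φ p' → p = p' := by
    intro p p' he
    have hbl : ∀ ℓ, blk hkm (p.1 ℓ) (p.2 ℓ) = blk hkm (p'.1 ℓ) (p'.2 ℓ) := by
      intro ℓ
      have h2 := congrFun he ℓ
      simp only [hΦ] at h2
      exact mul_left_cancel (mul_right_cancel h2)
    have h1 : ∀ ℓ, p.1 ℓ = p'.1 ℓ ∧ p.2 ℓ = p'.2 ℓ := fun ℓ => blk_inj hkm (hbl ℓ)
    exact Prod.ext (funext fun ℓ => (h1 ℓ).1) (funext fun ℓ => (h1 ℓ).2)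
  -- (C5) surjectivity
  have C5 : ∀ σ : Fin d → Equiv.Perm (Fin n),
      (σ 0 = 1 ∧ ∀ ℓ, (I 0).image (σ ℓ) = I ℓ) →
      ∃ p, (p.1 0 = 1 ∧ p.2 0 = 1) ∧ Φ p = σ := by
    intro σ hσ
    have pres : ∀ ℓ (x : Fin n), x.val < k →
        (((piPerm (I ℓ))⁻¹ * σ ℓ * P0) x).val < k := by
      intro ℓ x hx
      simp only [Equiv.Perm.mul_apply]
      have hy : P0 x ∈ I 0 := by
        rw [hP0, piPerm_apply_lt (I 0) (h 0) x hx]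
        exact (((I 0).orderIsoOfFin (h 0)) ⟨x.val, hx⟩).2
      have hz : σ ℓ (P0 x) ∈ I ℓ := by
        rw [← hσ.2 ℓ]; exact Finset.mem_image_of_mem _ hy
      by_contra hcon
      push_neg at hcon
      have hmem : σ ℓ (P0 x) ∈ (I ℓ)ᶜ := by
        have happ : piPerm (I ℓ) ((piPerm (I ℓ))⁻¹ (σ ℓ (P0 x))) = σ ℓ (P0 x) :=
          Equiv.apply_symm_apply _ _
        rw [← happ, piPerm_apply_ge (I ℓ) (h ℓ) (hcc ℓ) _ hcon]
        exact (((I ℓ)ᶜ.orderIsoOfFin (hcc ℓ)) _).2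
      rw [Finset.mem_compl] at hmem
      exact hmem hz
    have hex : ∀ ℓ, ∃ τ ρ, (piPerm (I ℓ))⁻¹ * σ ℓ * P0 = blk hkm τ ρ :=
      fun ℓ => exists_blk hkm _ (pres ℓ)
    choose τ ρ hτρ using hex
    have hΦσ : Φ (τ, ρ) = σ := by
      funext ℓ
      show piPerm (I ℓ) * blk hkm (τ ℓ) (ρ ℓ) * P0⁻¹ = σ ℓ
      rw [← hτρ ℓ, hP0]
      group
    refine ⟨(τ, ρ), ?_, hΦσ⟩
    have h0 : blk hkm (τ 0) (ρ 0) = blk hkm 1 1 := by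
      rw [← hτρ 0, hσ.1, blk_one, hP0]
      group
    exact blk_inj hkm h0
  -- sign computation
  have hsign : ∀ p : (Fin d → Equiv.Perm (Fin k)) × (Fin d → Equiv.Perm (Fin (n - k))),
      (∏ ℓ, Equiv.Perm.sign (Φ p ℓ)) =
        (∏ ℓ, Equiv.Perm.sign (piPerm (I ℓ))) * (∏ ℓ, Equiv.Perm.sign (p.1 ℓ)) *
          (∏ ℓ, Equiv.Perm.sign (p.2 ℓ)) := by
    intro p
    have e : ∀ ℓ : Fin d, Equiv.Perm.sign (Φ p ℓ) =
        Equiv.Perm.sign (piPerm (I ℓ)) * (Equiv.Perm.sign (p.1 ℓ) *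
          Equiv.Perm.sign (p.2 ℓ)) * Equiv.Perm.sign (piPerm (I 0)) := by
      intro ℓ
      show Equiv.Perm.sign (piPerm (I ℓ) * blk hkm (p.1 ℓ) (p.2 ℓ) * P0⁻¹) = _
      rw [map_mul, map_mul, sign_blk, Equiv.Perm.sign_inv, hP0]
    rw [Finset.prod_congr rfl (fun ℓ _ => e ℓ)]
    rw [Finset.prod_mul_distrib, Finset.prod_mul_distrib, Finset.prod_const]
    have hcard : (Finset.univ : Finset (Fin d)).card = d := by simp
    rw [hcard]
    have hpow : ∀ s : ℤˣ, s ^ d = 1 := by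
      intro s
      obtain ⟨m, hm⟩ := hd
      rw [hm, ← two_mul, pow_mul, Int.units_sq, one_pow]
    rw [hpow _, mul_one, Finset.prod_mul_distrib, mul_assoc]
  -- product computations
  have hprodX : ∀ p : (Fin d → Equiv.Perm (Fin k)) × (Fin d → Equiv.Perm (Fin (n - k))),
      (∏ i ∈ I 0, X fun ℓ => Φ p ℓ i) =
        ∏ j : Fin k, X fun ℓ => ((I ℓ).orderIsoOfFin (h ℓ) (p.1 ℓ j) : Fin n) := by
    intro p
    rw [← prod_orderIsoOfFin' (I 0) (h 0) (fun i => X fun ℓ => Φ p ℓ i)]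
    apply Finset.prod_congr rfl
    intro j _
    congr 1
    funext ℓ
    exact C1 p ℓ j
  have hprodY : ∀ p : (Fin d → Equiv.Perm (Fin k)) × (Fin d → Equiv.Perm (Fin (n - k))),
      (∏ i ∈ (I 0)ᶜ, Y fun ℓ => Φ p ℓ i) =
        ∏ j : Fin (n - k), Y fun ℓ => ((I ℓ)ᶜ.orderIsoOfFin (hcc ℓ) (p.2 ℓ j) : Fin n) := by
    intro p
    rw [← prod_orderIsoOfFin' (I 0)ᶜ (hcc 0) (fun i => Y fun ℓ => Φ p ℓ i)]
    apply Finset.prod_congr rfl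
    intro j _
    congr 1
    funext ℓ
    exact C2 p ℓ j
  -- main bijection step
  have main : (∑ σ : Fin d → Equiv.Perm (Fin n),
      if σ 0 = 1 ∧ ∀ ℓ, (I 0).image (σ ℓ) = I ℓ then
        ((((∏ ℓ, Equiv.Perm.sign (σ ℓ)) : ℤˣ) : ℤ) : F) *
          ((∏ i ∈ I 0, X fun ℓ => σ ℓ i) * ∏ i ∈ (I 0)ᶜ, Y fun ℓ => σ ℓ i)
      else 0) =
      ∑ p : (Fin d → Equiv.Perm (Fin k)) × (Fin d → Equiv.Perm (Fin (n - k))),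
        if p.1 0 = 1 ∧ p.2 0 = 1 then
          ((((∏ ℓ, Equiv.Perm.sign (Φ p ℓ)) : ℤˣ) : ℤ) : F) *
            ((∏ i ∈ I 0, X fun ℓ => Φ p ℓ i) * ∏ i ∈ (I 0)ᶜ, Y fun ℓ => Φ p ℓ i)
        else 0 := by
    rw [← Finset.sum_filter, ← Finset.sum_filter]
    refine (Finset.sum_bij (fun p _ => Φ p) ?_ ?_ ?_ ?_).symm
    · intro p hp
      simp only [Finset.mem_filter, Finset.mem_univ, true_and] at hp ⊢
      exact C3 p hp
    · intro p hp p' hp' he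
      exact C4 p p' he
    · intro σ hσ
      simp only [Finset.mem_filter, Finset.mem_univ, true_and] at hσ
      obtain ⟨p, hp, hpσ⟩ := C5 σ hσ
      exact ⟨p, by simp [hp], hpσ⟩
    · intro p hp
      rfl
  rw [main, hdet, hdet]
  simp only [Finset.mul_sum, Finset.sum_mul]
  rw [Fintype.sum_prod_type, Finset.sum_comm]
  apply Finset.sum_congr rfl
  intro ρ _
  apply Finset.sum_congr rfl
  intro τ _
  show _ = _
  by_cases h1 : τ 0 = 1
  · by_cases h2 : ρ 0 = 1
    · rw [if_pos ⟨h1, h2⟩, if_pos h1, if_pos h2]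
      rw [hsign (τ, ρ), hprodX (τ, ρ), hprodY (τ, ρ)]
      push_cast [Units.val_mul]
      ring
    · rw [if_neg (fun hc => h2 hc.2), if_neg h2]
      ring
  · rw [if_neg (fun hc => h1 hc.1), if_neg h1]
    ring

end Aux

/-- the minor summation formula for hyperdeterminants. -/
theorem hdet_add_minor_summation [Field F] {d n : ℕ} [NeZero d] (hd : Even d)
    (X Y : (Fin d → Fin n) → F) :
    hdet (X + Y) =
      ∑ k ∈ Finset.range (n + 1), ∑ I : Fin d → Finset (Fin n),
        if h : ∀ ℓ, (I ℓ).card = k then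
          ((((∏ ℓ, Equiv.Perm.sign (piPerm (I ℓ))) : ℤˣ) : ℤ) : F) *
          hdet (fun j : Fin d → Fin k =>
            X fun ℓ => ((I ℓ).orderIsoOfFin (h ℓ) (j ℓ) : Fin n)) *
          hdet (fun j : Fin d → Fin (n - k) =>
            Y fun ℓ => ((I ℓ)ᶜ.orderIsoOfFin
              (by simp [Finset.card_compl, h ℓ]) (j ℓ) : Fin n))
        else 0 := by
  classical
  have step1 : hdet (X + Y) = ∑ S : Finset (Fin n), ∑ σ : Fin d → Equiv.Perm (Fin n),
      if σ 0 = 1 then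
        ((((∏ ℓ, Equiv.Perm.sign (σ ℓ)) : ℤˣ) : ℤ) : F) *
          ((∏ i ∈ S, X fun ℓ => σ ℓ i) * ∏ i ∈ Sᶜ, Y fun ℓ => σ ℓ i)
      else 0 := by
    rw [hdet]
    have e1 : ∀ σ : Fin d → Equiv.Perm (Fin n),
        (if σ 0 = 1 then
          ((((∏ ℓ, Equiv.Perm.sign (σ ℓ)) : ℤˣ) : ℤ) : F) * ∏ i, (X + Y) fun ℓ => σ ℓ i
        else 0) =
        ∑ S : Finset (Fin n), if σ 0 = 1 then
          ((((∏ ℓ, Equiv.Perm.sign (σ ℓ)) : ℤˣ) : ℤ) : F) *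
            ((∏ i ∈ S, X fun ℓ => σ ℓ i) * ∏ i ∈ Sᶜ, Y fun ℓ => σ ℓ i)
        else 0 := by
      intro σ
      by_cases h0 : σ 0 = 1
      · simp only [if_pos h0]
        have hPA : (∏ i, (X + Y) fun ℓ => σ ℓ i) = ∑ S : Finset (Fin n),
            (∏ i ∈ S, X fun ℓ => σ ℓ i) * ∏ i ∈ Sᶜ, Y fun ℓ => σ ℓ i := by
          simp only [Pi.add_apply]
          rw [Finset.prod_add, Finset.powerset_univ]
          refine Finset.sum_congr rfl fun S _ => ?_
          rw [Finset.compl_eq_univ_sdiff]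
        rw [hPA, Finset.mul_sum]
      · simp [h0]
    rw [Finset.sum_congr rfl fun σ _ => e1 σ, Finset.sum_comm]
  have step2 : hdet (X + Y) = ∑ I : Fin d → Finset (Fin n),
      ∑ σ : Fin d → Equiv.Perm (Fin n),
      if σ 0 = 1 ∧ ∀ ℓ, (I 0).image (σ ℓ) = I ℓ then
        ((((∏ ℓ, Equiv.Perm.sign (σ ℓ)) : ℤˣ) : ℤ) : F) *
          ((∏ i ∈ I 0, X fun ℓ => σ ℓ i) * ∏ i ∈ (I 0)ᶜ, Y fun ℓ => σ ℓ i)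
      else 0 := by
    rw [step1]
    have e2 : ∀ S : Finset (Fin n),
        (∑ σ : Fin d → Equiv.Perm (Fin n),
          if σ 0 = 1 then
            ((((∏ ℓ, Equiv.Perm.sign (σ ℓ)) : ℤˣ) : ℤ) : F) *
              ((∏ i ∈ S, X fun ℓ => σ ℓ i) * ∏ i ∈ Sᶜ, Y fun ℓ => σ ℓ i)
          else 0) =
        ∑ I : Fin d → Finset (Fin n),
          ∑ σ ∈ Finset.univ.filter (fun σ : Fin d → Equiv.Perm (Fin n) =>
              (fun ℓ => S.image (σ ℓ)) = I),
            if σ 0 = 1 then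
              ((((∏ ℓ, Equiv.Perm.sign (σ ℓ)) : ℤˣ) : ℤ) : F) *
                ((∏ i ∈ S, X fun ℓ => σ ℓ i) * ∏ i ∈ Sᶜ, Y fun ℓ => σ ℓ i)
            else 0 := fun S => (Finset.sum_fiberwise _ _ _).symm
    rw [Finset.sum_congr rfl fun S _ => e2 S, Finset.sum_comm]
    refine Finset.sum_congr rfl fun I _ => ?_
    rw [Finset.sum_eq_single (I 0) ?_ ?_]
    · rw [Finset.sum_filter]
      refine Finset.sum_congr rfl fun σ _ => ?_
      by_cases hA : (fun ℓ => (I 0).image (σ ℓ)) = I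
      · by_cases hB : σ 0 = 1
        · rw [if_pos hA, if_pos hB, if_pos ⟨hB, fun ℓ => congrFun hA ℓ⟩]
        · rw [if_pos hA, if_neg hB, if_neg (fun hc => hB hc.1)]
      · rw [if_neg hA]
        by_cases hB : σ 0 = 1
        · rw [if_neg (fun hc => hA (funext hc.2))]
        · rw [if_neg (fun hc => hB hc.1)]
    · intro S _ hS
      apply Finset.sum_eq_zero
      intro σ hσ
      rw [Finset.mem_filter] at hσ
      by_cases hB : σ 0 = 1
      · exfalso
        apply hS
        have h3 := congrFun hσ.2 0
        rw [hB] at h3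
        simpa using h3
      · rw [if_neg hB]
    · intro hmem
      exact absurd (Finset.mem_univ _) hmem
  rw [step2]
  conv_rhs => rw [Finset.sum_comm]
  refine Finset.sum_congr rfl fun I _ => ?_
  by_cases hI : ∀ ℓ, (I ℓ).card = (I 0).card
  · rw [Finset.sum_eq_single ((I 0).card) ?_ ?_]
    · rw [dif_pos hI]
      exact key hd X Y I hI
    · intro k _ hk
      exact dif_neg (fun hc => hk (hc 0).symm)
    · intro hmem
      exfalso
      apply hmem
      refine Finset.mem_range.mpr ?_
      have := Finset.card_le_univ (I 0)
      simp only [Fintype.card_fin, Finset.card_univ] at this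
      omega
  · have hz1 : (∑ σ : Fin d → Equiv.Perm (Fin n),
        if σ 0 = 1 ∧ ∀ ℓ, (I 0).image (σ ℓ) = I ℓ then
          ((((∏ ℓ, Equiv.Perm.sign (σ ℓ)) : ℤˣ) : ℤ) : F) *
            ((∏ i ∈ I 0, X fun ℓ => σ ℓ i) * ∏ i ∈ (I 0)ᶜ, Y fun ℓ => σ ℓ i)
        else 0) = 0 := by
      apply Finset.sum_eq_zero
      intro σ _
      rw [if_neg]
      rintro ⟨h1, h2⟩
      apply hI
      intro ℓ
      rw [← h2 ℓ, Finset.card_image_of_injective _ (Equiv.injective _)]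
    rw [hz1]
    symm
    apply Finset.sum_eq_zero
    intro k _
    exact dif_neg (fun hc => hI fun ℓ => (hc ℓ).trans (hc 0).symm)
end

section
/- Laplace expansion for hyperdeterminants: for even d and T ∈ T^d(n), det(T) = Σ_{i_2,...,i_d ∈ [n]} (−1)^{1+i_2+...+i_d} T(1, i_2,...,i_d) det(T_{\bar{1}, \bar{i_2},...,\bar{i_d}}), where T_{\bar{1},\bar{i_2},...,\bar{i_d}} is the subtensor obtained by deleting index 1 from the first coordinate and index i_k from the k-th coordinate. -/
open Finset

variable {F : Type*}

namespace LaplaceAux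
variable {n : ℕ}

/-- Decomposition of a permutation of `Fin (n+1)` into its value at `0` and a
permutation of `Fin n` acting via `succAbove`. -/
def permFinEquiv : Fin (n + 1) × Equiv.Perm (Fin n) ≃ Equiv.Perm (Fin (n + 1)) where
  toFun p := (Fin.cycleRange p.1)⁻¹ * Equiv.Perm.decomposeFin.symm (0, p.2)
  invFun σ := (σ 0, (Equiv.Perm.decomposeFin (Fin.cycleRange (σ 0) * σ)).2)
  left_inv := by
    rintro ⟨v, π⟩
    have h0 : ((Fin.cycleRange v)⁻¹ * Equiv.Perm.decomposeFin.symm (0, π)) 0 = v := by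
      simp [Equiv.Perm.mul_apply, Equiv.Perm.decomposeFin_symm_apply_zero, Equiv.Perm.inv_def]
    simp only [h0]
    have : Fin.cycleRange v * ((Fin.cycleRange v)⁻¹ * Equiv.Perm.decomposeFin.symm (0, π)) =
        Equiv.Perm.decomposeFin.symm (0, π) := by group
    rw [this, Equiv.apply_symm_apply]
  right_inv := by
    intro σ
    have hfst : ∀ τ : Equiv.Perm (Fin (n + 1)), (Equiv.Perm.decomposeFin τ).1 = τ 0 := by
      intro τ
      conv_rhs => rw [← Equiv.symm_apply_apply Equiv.Perm.decomposeFin τ]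
      rw [show Equiv.Perm.decomposeFin τ =
        ((Equiv.Perm.decomposeFin τ).1, (Equiv.Perm.decomposeFin τ).2) from rfl,
        Equiv.Perm.decomposeFin_symm_apply_zero]
    have h0 : (Fin.cycleRange (σ 0) * σ) 0 = 0 := by
      simp [Equiv.Perm.mul_apply, Fin.cycleRange_self]
    have : ((0 : Fin (n + 1)), (Equiv.Perm.decomposeFin (Fin.cycleRange (σ 0) * σ)).2) =
        Equiv.Perm.decomposeFin (Fin.cycleRange (σ 0) * σ) := by
      rw [show Equiv.Perm.decomposeFin (Fin.cycleRange (σ 0) * σ) =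
        ((Equiv.Perm.decomposeFin _).1, (Equiv.Perm.decomposeFin _).2) from rfl]
      simp [hfst, h0]
    simp only [this, Equiv.symm_apply_apply]
    group

@[simp] lemma permFinEquiv_apply_zero (p : Fin (n + 1) × Equiv.Perm (Fin n)) :
    permFinEquiv p 0 = p.1 := by
  simp [permFinEquiv, Equiv.Perm.mul_apply, Equiv.Perm.decomposeFin_symm_apply_zero, Equiv.Perm.inv_def]

@[simp] lemma permFinEquiv_apply_succ (p : Fin (n + 1) × Equiv.Perm (Fin n)) (j : Fin n) :
    permFinEquiv p j.succ = p.1.succAbove (p.2 j) := by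
  simp [permFinEquiv, Equiv.Perm.mul_apply, Equiv.Perm.decomposeFin_symm_apply_succ, Equiv.Perm.inv_def]

lemma permFinEquiv_sign (p : Fin (n + 1) × Equiv.Perm (Fin n)) :
    Equiv.Perm.sign (permFinEquiv p) = (-1) ^ (p.1 : ℕ) * Equiv.Perm.sign p.2 := by
  simp [permFinEquiv, Equiv.Perm.decomposeFin.symm_sign, Fin.sign_cycleRange]

lemma permFinEquiv_eq_one_iff (p : Fin (n + 1) × Equiv.Perm (Fin n)) :
    permFinEquiv p = 1 ↔ p.1 = 0 ∧ p.2 = 1 := by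
  have h1 : permFinEquiv ((0 : Fin (n + 1)), (1 : Equiv.Perm (Fin n))) = 1 := by
    ext i
    refine Fin.cases ?_ (fun j => ?_) i
    · simp
    · simp [Fin.zero_succAbove]
  constructor
  · intro h
    have := permFinEquiv.injective (h.trans h1.symm)
    exact ⟨congrArg Prod.fst this, congrArg Prod.snd this⟩
  · rintro ⟨h1', h2'⟩
    rw [show p = (p.1, p.2) from rfl, h1', h2', h1]

end LaplaceAux
/-- the Laplace expansion for hyperdeterminants (indices are
zero-based; since `d` is even, the sign `(−1)^{1+i_2+⋯+i_d}` of the one-based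
formula equals `(−1)^{Σ_ℓ v_ℓ}` in zero-based indices `v`). -/
theorem hdet_laplace_expansion [Field F] {d n : ℕ} [NeZero d] (hd : Even d)
    (T : (Fin d → Fin (n + 1)) → F) :
    hdet T =
      ∑ v : Fin d → Fin (n + 1),
        if v 0 = 0 then
          (-1 : F) ^ (∑ ℓ, ((v ℓ) : ℕ)) * T v *
            hdet (fun j : Fin d → Fin n => T fun ℓ => (v ℓ).succAbove (j ℓ))
        else 0 := by
  have key : hdet T =
      ∑ v : Fin d → Fin (n + 1), ∑ π : Fin d → Equiv.Perm (Fin n),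
        if LaplaceAux.permFinEquiv (v 0, π 0) = 1 then
          ((((∏ ℓ, Equiv.Perm.sign (LaplaceAux.permFinEquiv (v ℓ, π ℓ))) : ℤˣ) : ℤ) : F) *
            ∏ i, T (fun ℓ => LaplaceAux.permFinEquiv (v ℓ, π ℓ) i)
        else 0 := by
    rw [hdet]
    rw [(Fintype.sum_equiv
      ((Equiv.arrowProdEquivProdArrow (Fin d) (fun _ => Fin (n + 1)) (fun _ => Equiv.Perm (Fin n))).symm.trans
        (Equiv.piCongrRight fun _ => LaplaceAux.permFinEquiv)) _
      (fun σ : Fin d → Equiv.Perm (Fin (n + 1)) =>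
        if σ 0 = 1 then
          ((((∏ ℓ, Equiv.Perm.sign (σ ℓ)) : ℤˣ) : ℤ) : F) * ∏ i, T (fun ℓ => σ ℓ i)
        else 0) fun p => rfl).symm]
    rw [Fintype.sum_prod_type]
    rfl
  rw [key]
  refine Finset.sum_congr rfl fun v _ => ?_
  by_cases hv : v 0 = 0
  · rw [if_pos hv, hdet, Finset.mul_sum]
    refine Finset.sum_congr rfl fun π _ => ?_
    have hcond : LaplaceAux.permFinEquiv (v 0, π 0) = 1 ↔ π 0 = 1 := by
      rw [LaplaceAux.permFinEquiv_eq_one_iff]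
      simp [hv]
    by_cases hπ : π 0 = 1
    · rw [if_pos (hcond.mpr hπ), if_pos hπ]
      have hsign : (∏ ℓ, Equiv.Perm.sign (LaplaceAux.permFinEquiv (v ℓ, π ℓ))) =
          (-1 : ℤˣ) ^ (∑ ℓ, ((v ℓ) : ℕ)) * ∏ ℓ, Equiv.Perm.sign (π ℓ) := by
        simp_rw [LaplaceAux.permFinEquiv_sign]
        rw [Finset.prod_mul_distrib, Finset.prod_pow_eq_pow_sum]
      have hprod : (∏ i, T fun ℓ => LaplaceAux.permFinEquiv (v ℓ, π ℓ) i) =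
          T v * ∏ j, T fun ℓ => (v ℓ).succAbove (π ℓ j) := by
        rw [Fin.prod_univ_succ]
        have h0 : (fun ℓ => LaplaceAux.permFinEquiv (v ℓ, π ℓ) 0) = v :=
          funext fun ℓ => LaplaceAux.permFinEquiv_apply_zero _
        have hs : ∀ j : Fin n, (fun ℓ => LaplaceAux.permFinEquiv (v ℓ, π ℓ) j.succ) =
            fun ℓ => (v ℓ).succAbove (π ℓ j) :=
          fun j => funext fun ℓ => LaplaceAux.permFinEquiv_apply_succ _ j
        rw [h0]
        exact congrArg (T v * ·) (Finset.prod_congr rfl fun j _ => congrArg T (hs j))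
      rw [hsign, hprod]
      push_cast
      ring
    · rw [if_neg (fun h => hπ (hcond.mp h)), if_neg hπ, mul_zero]
  · rw [if_neg hv]
    refine Finset.sum_eq_zero fun π _ => ?_
    rw [if_neg]
    intro h
    exact hv ((LaplaceAux.permFinEquiv_eq_one_iff _).mp h).1
end

section
/- Outer product formula: if d − k is even and X ∈ T^k(n), Y ∈ T^{d−k}(n), then det(X ⊗ Y) = det(X) · det(Y) · n!, where (X ⊗ Y)(i_1,...,i_d) = X(i_1,...,i_k)·Y(i_{k+1},...,i_d). -/
open Finset

variable {F : Type*}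

lemma sum_all_perms [CommRing F] {m n : ℕ} [NeZero m] (hm : Even m)
    (Y : (Fin m → Fin n) → F) :
    ∑ σ : Fin m → Equiv.Perm (Fin n),
      ((((∏ ℓ, Equiv.Perm.sign (σ ℓ)) : ℤˣ) : ℤ) : F) * ∏ i, Y (fun ℓ => σ ℓ i)
    = hdet Y * (Nat.factorial n : F) := by
  classical
  set f : (Fin m → Equiv.Perm (Fin n)) → F := fun σ =>
    ((((∏ ℓ, Equiv.Perm.sign (σ ℓ)) : ℤˣ) : ℤ) : F) * ∏ i, Y (fun ℓ => σ ℓ i) with hf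
  have key : ∀ π : Equiv.Perm (Fin n),
      hdet Y = ∑ σ : Fin m → Equiv.Perm (Fin n), if σ 0 = π then f σ else 0 := by
    intro π
    have hπ : (Equiv.Perm.sign π) ^ m = 1 := by
      obtain ⟨c, rfl⟩ := hm
      rw [← two_mul, pow_mul, Int.units_sq, one_pow]
    rw [hdet]
    refine Fintype.sum_equiv (Equiv.piCongrRight fun _ => Equiv.mulRight π) _ _ ?_
    intro σ
    simp only [Equiv.piCongrRight_apply, Equiv.coe_mulRight, Pi.map_apply, hf]
    have h0 : (σ 0 * π = π) ↔ (σ 0 = 1) := mul_eq_right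
    rw [if_congr h0.symm rfl rfl]
    congr 1
    congr 1
    · -- signs
      have : ∏ ℓ, Equiv.Perm.sign (σ ℓ * π)
          = (∏ ℓ, Equiv.Perm.sign (σ ℓ)) * (Equiv.Perm.sign π) ^ m := by
        simp [map_mul, Finset.prod_mul_distrib]
      rw [this, hπ, mul_one]
    · -- products
      calc ∏ i, Y (fun ℓ => σ ℓ i)
          = ∏ i, Y (fun ℓ => σ ℓ (π i)) := (Equiv.prod_comp π fun i => Y fun ℓ => σ ℓ i).symm
        _ = ∏ i, Y (fun ℓ => (σ ℓ * π) i) := rfl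
  calc ∑ σ, f σ = ∑ σ : Fin m → Equiv.Perm (Fin n), ∑ π : Equiv.Perm (Fin n),
        if σ 0 = π then f σ else 0 := by
        refine Finset.sum_congr rfl fun σ _ => ?_
        rw [Finset.sum_ite_eq (Finset.univ) (σ 0) (fun _ => f σ)]
        simp
    _ = ∑ π : Equiv.Perm (Fin n), ∑ σ : Fin m → Equiv.Perm (Fin n),
        if σ 0 = π then f σ else 0 := Finset.sum_comm
    _ = ∑ _π : Equiv.Perm (Fin n), hdet Y := by
        exact Finset.sum_congr rfl fun π _ => (key π).symm
    _ = hdet Y * (Nat.factorial n : F) := by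
        rw [Finset.sum_const, Finset.card_univ, Fintype.card_perm, Fintype.card_fin, nsmul_eq_mul, mul_comm]


/-- the outer product formula
`det(X ⊗ Y) = det(X) ⋅ det(Y) ⋅ n!` when the number of coordinates of `Y`
is even. -/
theorem hdet_outer_product [Field F] {k m n : ℕ} [NeZero k] [NeZero m]
    [NeZero (k + m)] (hm : Even m)
    (X : (Fin k → Fin n) → F) (Y : (Fin m → Fin n) → F) :
    hdet (fun i : Fin (k + m) → Fin n =>
        X (fun a => i (Fin.castAdd m a)) * Y (fun b => i (Fin.natAdd k b))) =
      hdet X * hdet Y * (Nat.factorial n : F) := by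
  classical
  rw [hdet]
  rw [← Fintype.sum_equiv ((Equiv.sumArrowEquivProdArrow (Fin k) (Fin m)
        (Equiv.Perm (Fin n))).symm.trans
        (Equiv.arrowCongr finSumFinEquiv (Equiv.refl _)))
      _ _ (fun _ => rfl)]
  rw [Fintype.sum_prod_type]
  have hzero : ∀ σ₁ : Fin k → Equiv.Perm (Fin n),
      ∀ σ₂ : Fin m → Equiv.Perm (Fin n),
      (((Equiv.sumArrowEquivProdArrow (Fin k) (Fin m)
        (Equiv.Perm (Fin n))).symm.trans
        (Equiv.arrowCongr finSumFinEquiv (Equiv.refl _))) (σ₁, σ₂)) 0 = σ₁ 0 := by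
    intro σ₁ σ₂
    have : (0 : Fin (k + m)) = Fin.castAdd m (0 : Fin k) := rfl
    rw [this]
    simp [Equiv.sumArrowEquivProdArrow, Equiv.arrowCongr]
  have hcast : ∀ (σ₁ : Fin k → Equiv.Perm (Fin n)) (σ₂ : Fin m → Equiv.Perm (Fin n))
      (a : Fin k),
      (((Equiv.sumArrowEquivProdArrow (Fin k) (Fin m)
        (Equiv.Perm (Fin n))).symm.trans
        (Equiv.arrowCongr finSumFinEquiv (Equiv.refl _))) (σ₁, σ₂)) (Fin.castAdd m a)
      = σ₁ a := by
    intro σ₁ σ₂ a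
    simp [Equiv.sumArrowEquivProdArrow, Equiv.arrowCongr]
  have hnat : ∀ (σ₁ : Fin k → Equiv.Perm (Fin n)) (σ₂ : Fin m → Equiv.Perm (Fin n))
      (b : Fin m),
      (((Equiv.sumArrowEquivProdArrow (Fin k) (Fin m)
        (Equiv.Perm (Fin n))).symm.trans
        (Equiv.arrowCongr finSumFinEquiv (Equiv.refl _))) (σ₁, σ₂)) (Fin.natAdd k b)
      = σ₂ b := by
    intro σ₁ σ₂ b
    simp [Equiv.sumArrowEquivProdArrow, Equiv.arrowCongr]
  calc (∑ σ₁ : Fin k → Equiv.Perm (Fin n), ∑ σ₂ : Fin m → Equiv.Perm (Fin n), _)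
      = ∑ σ₁ : Fin k → Equiv.Perm (Fin n),
          (if σ₁ 0 = 1 then
            ((((∏ ℓ, Equiv.Perm.sign (σ₁ ℓ)) : ℤˣ) : ℤ) : F) * ∏ i, X (fun a => σ₁ a i)
          else 0) *
          ∑ σ₂ : Fin m → Equiv.Perm (Fin n),
            ((((∏ ℓ, Equiv.Perm.sign (σ₂ ℓ)) : ℤˣ) : ℤ) : F) * ∏ i, Y (fun b => σ₂ b i) := by
        refine Finset.sum_congr rfl fun σ₁ _ => ?_
        rw [Finset.mul_sum]
        refine Finset.sum_congr rfl fun σ₂ _ => ?_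
        rw [hzero σ₁ σ₂]
        by_cases h : σ₁ 0 = 1
        · simp only [h, if_true]
          have hsign : (∏ ℓ : Fin (k + m), Equiv.Perm.sign
              ((((Equiv.sumArrowEquivProdArrow (Fin k) (Fin m)
                (Equiv.Perm (Fin n))).symm.trans
                (Equiv.arrowCongr finSumFinEquiv (Equiv.refl _))) (σ₁, σ₂)) ℓ))
              = (∏ ℓ, Equiv.Perm.sign (σ₁ ℓ)) * ∏ ℓ, Equiv.Perm.sign (σ₂ ℓ) := by
            rw [Fin.prod_univ_add]
            congr 1
            · exact Finset.prod_congr rfl fun a _ => by rw [hcast]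
            · exact Finset.prod_congr rfl fun b _ => by rw [hnat]
          have hprod : (∏ i : Fin n,
              (X (fun a => (((Equiv.sumArrowEquivProdArrow (Fin k) (Fin m)
                (Equiv.Perm (Fin n))).symm.trans
                (Equiv.arrowCongr finSumFinEquiv (Equiv.refl _))) (σ₁, σ₂)) (Fin.castAdd m a) i) *
               Y (fun b => (((Equiv.sumArrowEquivProdArrow (Fin k) (Fin m)
                (Equiv.Perm (Fin n))).symm.trans
                (Equiv.arrowCongr finSumFinEquiv (Equiv.refl _))) (σ₁, σ₂)) (Fin.natAdd k b) i)))
              = (∏ i, X (fun a => σ₁ a i)) * ∏ i, Y (fun b => σ₂ b i) := by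
            rw [← Finset.prod_mul_distrib]
            refine Finset.prod_congr rfl fun i _ => ?_
            congr 1
            · congr 1; funext a; rw [hcast]
            · congr 1; funext b; rw [hnat]
          rw [hsign, hprod]
          push_cast
          ring
        · simp only [h, if_false, zero_mul]
      _ = hdet X * (hdet Y * (Nat.factorial n : F)) := by
        rw [← Finset.sum_mul, sum_all_perms hm Y, hdet, hdet]
      _ = hdet X * hdet Y * (Nat.factorial n : F) := by ring
end

section
/- Direct sum formula: for even d and X ∈ T^d(n), Y ∈ T^d(m), det(X ⊕ Y) = det(X) · det(Y), where X ⊕ Y ∈ T^d(n+m) agrees with X on indices all in [n], with Y on indices all in [n+1, n+m], and is 0 otherwise. -/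
open Finset

variable {F : Type*}

/-- The block permutation of `Fin (n + m)` built from a pair of permutations. -/
def dsPerm (n m : ℕ) (p : Equiv.Perm (Fin n) × Equiv.Perm (Fin m)) :
    Equiv.Perm (Fin (n + m)) :=
  finSumFinEquiv.permCongr (Equiv.Perm.sumCongr p.1 p.2)

lemma dsPerm_injective (n m : ℕ) : Function.Injective (dsPerm n m) := by
  intro p q h
  have h2 : Equiv.Perm.sumCongr p.1 p.2 = Equiv.Perm.sumCongr q.1 q.2 :=
    finSumFinEquiv.permCongr.injective h
  exact Equiv.Perm.sumCongrHom_injective (by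
    rw [Equiv.Perm.sumCongrHom_apply, Equiv.Perm.sumCongrHom_apply]; exact h2)

lemma dsPerm_one (n m : ℕ) : dsPerm n m (1, 1) = 1 := by
  ext x
  simp [dsPerm]

lemma sign_dsPerm (n m : ℕ) (p : Equiv.Perm (Fin n) × Equiv.Perm (Fin m)) :
    Equiv.Perm.sign (dsPerm n m p) = Equiv.Perm.sign p.1 * Equiv.Perm.sign p.2 := by
  simp [dsPerm]

lemma dsPerm_castAdd (n m : ℕ) (p : Equiv.Perm (Fin n) × Equiv.Perm (Fin m)) (a : Fin n) :
    dsPerm n m p (Fin.castAdd m a) = Fin.castAdd m (p.1 a) := by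
  simp [dsPerm, ← finSumFinEquiv_apply_left, Equiv.symm_apply_apply]

lemma dsPerm_natAdd (n m : ℕ) (p : Equiv.Perm (Fin n) × Equiv.Perm (Fin m)) (b : Fin m) :
    dsPerm n m p (Fin.natAdd n b) = Fin.natAdd n (p.2 b) := by
  simp [dsPerm, ← finSumFinEquiv_apply_right, Equiv.symm_apply_apply]

lemma dsPerm_range (n m : ℕ) (σ : Equiv.Perm (Fin (n + m)))
    (h : ∀ i : Fin (n + m), ((σ i : ℕ) < n ↔ (i : ℕ) < n)) :
    ∃ p, dsPerm n m p = σ := by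
  set π : Equiv.Perm (Fin n ⊕ Fin m) := finSumFinEquiv.permCongr.symm σ with hπ
  have hm : Set.MapsTo π (Set.range Sum.inl) (Set.range Sum.inl) := by
    rintro x ⟨a, rfl⟩
    have hv : ((σ (finSumFinEquiv (Sum.inl a)) : ℕ) < n) := by
      rw [h]; simp
    refine ⟨⟨_, hv⟩, ?_⟩
    apply finSumFinEquiv.injective
    simp only [hπ, Equiv.permCongr_symm, Equiv.permCongr_apply, Equiv.symm_symm,
      Equiv.apply_symm_apply]
    apply Fin.ext
    simp
  obtain ⟨q, hq⟩ := Equiv.Perm.mem_sumCongrHom_range_of_perm_mapsTo_inl hm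
  refine ⟨q, ?_⟩
  have : dsPerm n m q = finSumFinEquiv.permCongr π := by
    rw [dsPerm, ← hq, Equiv.Perm.sumCongrHom_apply]
  rw [this, hπ, Equiv.apply_symm_apply]


/-- the direct sum formula `det(X ⊕ Y) = det(X) ⋅ det(Y)` for
even `d`. -/
theorem hdet_direct_sum [Field F] {d n m : ℕ} [NeZero d] (hd : Even d)
    (X : (Fin d → Fin n) → F) (Y : (Fin d → Fin m) → F) :
    hdet (fun i : Fin d → Fin (n + m) =>
        if h : ∀ ℓ, ((i ℓ) : ℕ) < n then X (fun ℓ => ⟨i ℓ, h ℓ⟩)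
        else if h' : ∀ ℓ, n ≤ ((i ℓ) : ℕ) then
          Y (fun ℓ => ⟨(i ℓ : ℕ) - n, by
            have h1 := (i ℓ).isLt; have h2 := h' ℓ; omega⟩)
        else 0) =
      hdet X * hdet Y := by
  classical
  unfold hdet
  rw [Fintype.sum_mul_sum]
  rw [← Fintype.sum_prod_type']
  refine (Finset.sum_of_injOn
      (fun p : (Fin d → Equiv.Perm (Fin n)) × (Fin d → Equiv.Perm (Fin m)) =>
        fun ℓ => dsPerm n m (p.1 ℓ, p.2 ℓ)) ?_ (fun x _ => Finset.mem_coe.mpr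
        (Finset.mem_univ _)) ?_ ?_).symm
  · intro p _ q _ h
    have h' : ∀ ℓ, (p.1 ℓ, p.2 ℓ) = (q.1 ℓ, q.2 ℓ) :=
      fun ℓ => dsPerm_injective n m (congrFun h ℓ)
    exact Prod.ext (funext fun ℓ => congrArg Prod.fst (h' ℓ))
      (funext fun ℓ => congrArg Prod.snd (h' ℓ))
  · intro σ _ hσ
    by_cases h0 : σ 0 = 1
    · rw [if_pos h0]
      by_cases hB : ∀ ℓ, ∀ i : Fin (n + m), ((σ ℓ i : ℕ) < n ↔ (i : ℕ) < n)
      · exfalso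
        apply hσ
        have hex : ∀ ℓ, ∃ p, dsPerm n m p = σ ℓ := fun ℓ => dsPerm_range n m (σ ℓ) (hB ℓ)
        choose q hq using hex
        exact ⟨(fun ℓ => (q ℓ).1, fun ℓ => (q ℓ).2), Finset.mem_coe.mpr (Finset.mem_univ _),
          funext fun ℓ => by simpa using hq ℓ⟩
      · push_neg at hB
        obtain ⟨ℓ₀, i₀, hi⟩ := hB
        have h0i : σ 0 i₀ = i₀ := by rw [h0]; rfl
        have hz : (if h : ∀ ℓ, ((σ ℓ i₀ : ℕ)) < n then X (fun ℓ => ⟨σ ℓ i₀, h ℓ⟩)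
            else if h' : ∀ ℓ, n ≤ ((σ ℓ i₀ : ℕ)) then
              Y (fun ℓ => ⟨(σ ℓ i₀ : ℕ) - n, by
                have h1 := (σ ℓ i₀).isLt; have h2 := h' ℓ; omega⟩)
            else 0) = 0 := by
          by_cases hc : (i₀ : ℕ) < n
          · have hns : ¬ ((σ ℓ₀ i₀ : ℕ) < n) := by omega
            rw [dif_neg (fun hall => hns (hall ℓ₀)), dif_neg]
            intro hall
            have := hall 0
            rw [h0i] at this
            omega
          · have hns : (σ ℓ₀ i₀ : ℕ) < n := by omega
            rw [dif_neg, dif_neg (fun hall => by have := hall ℓ₀; omega)]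
            intro hall
            have := hall 0
            rw [h0i] at this
            omega
        exact mul_eq_zero_of_right _ (Finset.prod_eq_zero (Finset.mem_univ i₀) hz)
    · rw [if_neg h0]
  · intro p _
    simp only []
    have hone : dsPerm n m (p.1 0, p.2 0) = 1 ↔ (p.1 0 = 1 ∧ p.2 0 = 1) := by
      constructor
      · intro h
        have h2 := dsPerm_injective n m (h.trans (dsPerm_one n m).symm)
        exact ⟨congrArg Prod.fst h2, congrArg Prod.snd h2⟩
      · rintro ⟨h1, h2⟩; rw [h1, h2]; exact dsPerm_one n m
    by_cases h1 : p.1 0 = 1 <;> by_cases h2 : p.2 0 = 1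
    · rw [if_pos h1, if_pos h2, if_pos (hone.mpr ⟨h1, h2⟩)]
      have hc : (∏ ℓ, Equiv.Perm.sign (dsPerm n m (p.1 ℓ, p.2 ℓ)))
          = (∏ ℓ, Equiv.Perm.sign (p.1 ℓ)) * (∏ ℓ, Equiv.Perm.sign (p.2 ℓ)) := by
        rw [← Finset.prod_mul_distrib]
        exact Finset.prod_congr rfl fun ℓ _ => sign_dsPerm n m _
      have hPA : ∀ a : Fin n,
          (if h : ∀ ℓ, ((dsPerm n m (p.1 ℓ, p.2 ℓ) (Fin.castAdd m a) : ℕ)) < n then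
            X (fun ℓ => ⟨dsPerm n m (p.1 ℓ, p.2 ℓ) (Fin.castAdd m a), h ℓ⟩)
          else if h' : ∀ ℓ, n ≤ ((dsPerm n m (p.1 ℓ, p.2 ℓ) (Fin.castAdd m a) : ℕ)) then
            Y (fun ℓ => ⟨(dsPerm n m (p.1 ℓ, p.2 ℓ) (Fin.castAdd m a) : ℕ) - n, by
              have h1 := (dsPerm n m (p.1 ℓ, p.2 ℓ) (Fin.castAdd m a)).isLt
              have h2 := h' ℓ; omega⟩)
          else 0) = X (fun ℓ => p.1 ℓ a) := by
        intro a
        have hlt : ∀ ℓ, ((dsPerm n m (p.1 ℓ, p.2 ℓ) (Fin.castAdd m a) : ℕ)) < n := by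
          intro ℓ; rw [dsPerm_castAdd]; simp
        rw [dif_pos hlt]
        congr 1
        funext ℓ
        apply Fin.ext
        simp [dsPerm_castAdd]
      have hPB : ∀ b : Fin m,
          (if h : ∀ ℓ, ((dsPerm n m (p.1 ℓ, p.2 ℓ) (Fin.natAdd n b) : ℕ)) < n then
            X (fun ℓ => ⟨dsPerm n m (p.1 ℓ, p.2 ℓ) (Fin.natAdd n b), h ℓ⟩)
          else if h' : ∀ ℓ, n ≤ ((dsPerm n m (p.1 ℓ, p.2 ℓ) (Fin.natAdd n b) : ℕ)) then
            Y (fun ℓ => ⟨(dsPerm n m (p.1 ℓ, p.2 ℓ) (Fin.natAdd n b) : ℕ) - n, by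
              have h1 := (dsPerm n m (p.1 ℓ, p.2 ℓ) (Fin.natAdd n b)).isLt
              have h2 := h' ℓ; omega⟩)
          else 0) = Y (fun ℓ => p.2 ℓ b) := by
        intro b
        have hge : ∀ ℓ, n ≤ ((dsPerm n m (p.1 ℓ, p.2 ℓ) (Fin.natAdd n b) : ℕ)) := by
          intro ℓ; rw [dsPerm_natAdd]; simp
        have hnlt : ¬ ∀ ℓ, ((dsPerm n m (p.1 ℓ, p.2 ℓ) (Fin.natAdd n b) : ℕ)) < n := by
          intro hall
          have := hall 0
          have := hge 0
          omega
        rw [dif_neg hnlt, dif_pos hge]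
        congr 1
        funext ℓ
        apply Fin.ext
        simp [dsPerm_natAdd]
      rw [Fin.prod_univ_add]
      simp only [hPA, hPB, hc]
      push_cast
      ring
    · rw [if_pos h1, if_neg h2, mul_zero, if_neg (fun hh => h2 (hone.mp hh).2)]
    · rw [if_neg h1, zero_mul, if_neg (fun hh => h1 (hone.mp hh).1)]
    · rw [if_neg h1, zero_mul, if_neg (fun hh => h1 (hone.mp hh).1)]
end

section
/- Generic vanishing lemma: let d be even and suppose every simple tensor in S ⊆ T^d(n) is k-null for some k > 1. If T ∈ T^d(n) satisfies rank_S(T) < n/(k−1), then det(T) = 0. -/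
open Finset

variable {F : Type*}

section Aux

variable [CommRing F] {d n k : ℕ} [NeZero d]

/-- Multilinearity of the hyperdeterminant in the slices along coordinate `0`. -/
lemma hdet_sum_expand {r : ℕ} (c : Fin r → ((Fin d → Fin n) → F)) :
    hdet (∑ ℓ, c ℓ) = ∑ f : Fin n → Fin r, hdet (fun i => c (f (i 0)) i) := by
  classical
  have key : ∀ σ : Fin d → Equiv.Perm (Fin n), σ 0 = 1 →
      (∏ i, (∑ ℓ, c ℓ) (fun ℓ' => σ ℓ' i))
        = ∑ f : Fin n → Fin r, ∏ i, c (f ((fun ℓ' => σ ℓ' i) 0)) (fun ℓ' => σ ℓ' i) := by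
    intro σ hσ
    have h1 : ∀ i : Fin n, (∑ ℓ, c ℓ) (fun ℓ' => σ ℓ' i)
        = ∑ ℓ : Fin r, c ℓ (fun ℓ' => σ ℓ' i) := fun i => Finset.sum_apply _ _ _
    rw [Finset.prod_congr rfl (fun i _ => h1 i), Finset.prod_univ_sum,
      Fintype.piFinset_univ]
    refine Finset.sum_congr rfl (fun f _ => Finset.prod_congr rfl (fun i _ => ?_))
    simp [hσ]
  rw [hdet]
  calc ∑ σ : Fin d → Equiv.Perm (Fin n),
        (if σ 0 = 1 then
          ((((∏ ℓ, Equiv.Perm.sign (σ ℓ)) : ℤˣ) : ℤ) : F) * ∏ i, (∑ ℓ, c ℓ) (fun ℓ => σ ℓ i)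
        else 0)
      = ∑ σ : Fin d → Equiv.Perm (Fin n), ∑ f : Fin n → Fin r,
        (if σ 0 = 1 then
          ((((∏ ℓ, Equiv.Perm.sign (σ ℓ)) : ℤˣ) : ℤ) : F) *
            ∏ i, c (f ((fun ℓ' => σ ℓ' i) 0)) (fun ℓ' => σ ℓ' i)
        else 0) := by
        refine Finset.sum_congr rfl (fun σ _ => ?_)
        by_cases hσ : σ 0 = 1
        · rw [if_pos hσ, key σ hσ, Finset.mul_sum]
          exact Finset.sum_congr rfl (fun f _ => (if_pos hσ).symm)
        · rw [if_neg hσ]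
          exact (Finset.sum_eq_zero (fun f _ => if_neg hσ)).symm
    _ = ∑ f : Fin n → Fin r, ∑ σ : Fin d → Equiv.Perm (Fin n),
        (if σ 0 = 1 then
          ((((∏ ℓ, Equiv.Perm.sign (σ ℓ)) : ℤˣ) : ℤ) : F) *
            ∏ i, c (f ((fun ℓ' => σ ℓ' i) 0)) (fun ℓ' => σ ℓ' i)
        else 0) := Finset.sum_comm
    _ = ∑ f : Fin n → Fin r, hdet (fun i => c (f (i 0)) i) := by
        refine Finset.sum_congr rfl (fun f _ => ?_)
        rw [hdet]

/-- Core lemma: if `U` agrees with a `k`-null tensor `c` on all slices with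
first index in a set `I` of size `k`, and `d` is even, then `hdet U = 0`. -/
lemma hdet_eq_zero_of_agree_on_slices (hd : Even d)
    {c U : (Fin d → Fin n) → F} (hc : kNull k c)
    (I : Finset (Fin n)) (hI : I.card = k)
    (hU : ∀ i : Fin d → Fin n, i 0 ∈ I → U i = c i) :
    hdet U = 0 := by
  classical
  set eqv : Fin k ≃ {x : Fin n // x ∈ I} := (I.orderIsoOfFin hI).toEquiv with heqv
  set ext : Equiv.Perm (Fin k) →* Equiv.Perm (Fin n) := Equiv.Perm.extendDomainHom eqv
    with hext
  set H : Subgroup (Equiv.Perm (Fin n)) := ext.range with hH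
  set emb : Fin k ↪o Fin n := I.orderEmbOfFin hI with hemb
  have hcoe : ∀ a : Fin k, ((eqv a : {x : Fin n // x ∈ I}) : Fin n) = emb a := by
    intro a
    simp [heqv, hemb, Finset.coe_orderIsoOfFin_apply]
  have extI : ∀ (τ : Equiv.Perm (Fin k)) (a : Fin k), ext τ (emb a) = emb (τ a) := by
    intro τ a
    have h := Equiv.Perm.extendDomain_apply_image τ eqv a
    rw [hcoe, hcoe] at h
    exact h
  have extNI : ∀ (τ : Equiv.Perm (Fin k)) (x : Fin n), x ∉ I → ext τ x = x := by
    intro τ x hx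
    exact Equiv.Perm.extendDomain_apply_not_subtype τ eqv hx
  set φ : (Equiv.Perm (Fin n) ⧸ H) × Equiv.Perm (Fin k) → Equiv.Perm (Fin n) :=
    fun x => x.1.out * ext x.2 with hφdef
  have φbij : Function.Bijective φ := by
    constructor
    · rintro ⟨q, τ⟩ ⟨q', τ'⟩ h
      simp only [hφdef] at h
      have h1 : q'.out⁻¹ * q.out = ext (τ' * τ⁻¹) := by
        rw [map_mul, map_inv]
        calc q'.out⁻¹ * q.out
            = q'.out⁻¹ * (q.out * ext τ) * (ext τ)⁻¹ := by group
          _ = q'.out⁻¹ * (q'.out * ext τ') * (ext τ)⁻¹ := by rw [h]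
          _ = ext τ' * (ext τ)⁻¹ := by group
      have hqq : q' = q := by
        have hmem : q'.out⁻¹ * q.out ∈ H := by
          rw [h1]; exact ⟨τ' * τ⁻¹, rfl⟩
        have h2 : ((q'.out : Equiv.Perm (Fin n) ⧸ H)) = (q.out : Equiv.Perm (Fin n) ⧸ H) :=
          QuotientGroup.eq.mpr hmem
        rwa [QuotientGroup.out_eq', QuotientGroup.out_eq'] at h2
      subst hqq
      have h3 : ext τ = ext τ' := mul_left_cancel h
      have h4 : τ = τ' := Equiv.Perm.extendDomainHom_injective eqv h3
      rw [h4]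
    · intro σ
      have hmem : ((σ : Equiv.Perm (Fin n) ⧸ H).out)⁻¹ * σ ∈ H := by
        rw [← QuotientGroup.eq, QuotientGroup.out_eq']
      obtain ⟨τ, hτ⟩ := hmem
      refine ⟨((σ : Equiv.Perm (Fin n) ⧸ H), τ), ?_⟩
      simp only [hφdef, hτ, mul_inv_cancel_left]
  -- expansion of hdet U over the coset decomposition
  set Φ : (Fin d → (Equiv.Perm (Fin n) ⧸ H) × Equiv.Perm (Fin k)) →
      (Fin d → Equiv.Perm (Fin n)) := fun p ℓ => φ (p ℓ) with hΦdef
  have Φbij : Function.Bijective Φ := by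
    constructor
    · intro p p' h
      funext ℓ
      exact φbij.1 (congrFun h ℓ)
    · intro σ
      choose p hp using fun ℓ => φbij.2 (σ ℓ)
      exact ⟨p, funext hp⟩
  have expand : hdet U = ∑ q : Fin d → Equiv.Perm (Fin n) ⧸ H,
      ∑ τ : Fin d → Equiv.Perm (Fin k),
      (if (q 0).out * ext (τ 0) = 1 then
        ((((∏ ℓ, Equiv.Perm.sign ((q ℓ).out * ext (τ ℓ))) : ℤˣ) : ℤ) : F) *
          ∏ i, U (fun ℓ => ((q ℓ).out * ext (τ ℓ)) i)
      else 0) := by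
    rw [hdet]
    rw [← Φbij.sum_comp (fun σ : Fin d → Equiv.Perm (Fin n) =>
      if σ 0 = 1 then
        ((((∏ ℓ, Equiv.Perm.sign (σ ℓ)) : ℤˣ) : ℤ) : F) * ∏ i, U (fun ℓ => σ ℓ i)
      else 0)]
    refine (Fintype.sum_equiv (Equiv.arrowProdEquivProdArrow _ _ _) _
      (fun x => if φ (x.1 0, x.2 0) = 1 then
        ((((∏ ℓ, Equiv.Perm.sign (φ (x.1 ℓ, x.2 ℓ))) : ℤˣ) : ℤ) : F) *
          ∏ i, U (fun ℓ => φ (x.1 ℓ, x.2 ℓ) i) else 0)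
      (fun p => rfl)).trans (Fintype.sum_prod_type
      (fun x : (Fin d → Equiv.Perm (Fin n) ⧸ H) × (Fin d → Equiv.Perm (Fin k)) =>
        if φ (x.1 0, x.2 0) = 1 then
        ((((∏ ℓ, Equiv.Perm.sign (φ (x.1 ℓ, x.2 ℓ))) : ℤˣ) : ℤ) : F) *
          ∏ i, U (fun ℓ => φ (x.1 ℓ, x.2 ℓ) i) else 0))
  rw [expand]
  refine Finset.sum_eq_zero fun q _ => ?_
  by_cases hex : ∃ τ0 : Equiv.Perm (Fin k), (q 0).out * ext τ0 = 1
  case neg =>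
    exact Finset.sum_eq_zero fun τ _ => if_neg (fun hcon => hex ⟨τ 0, hcon⟩)
  obtain ⟨τ₀, hτ₀⟩ := hex
  -- the column sets and sorting permutations
  have hJcard : ∀ ℓ : Fin d, (I.image ((q ℓ).out : Fin n → Fin n)).card = k := fun ℓ => by
    rw [Finset.card_image_of_injective _ (Equiv.injective _), hI]
  set J : Fin d → Finset (Fin n) := fun ℓ => I.image ((q ℓ).out : Fin n → Fin n) with hJdef
  set e' : Fin d → (Fin k → Fin n) := fun ℓ => ((J ℓ).orderEmbOfFin (hJcard ℓ) : Fin k → Fin n)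
    with he'def
  have hmemIff : ∀ (ℓ : Fin d) (x : Fin n), x ∈ I ↔ (q ℓ).out x ∈ J ℓ := by
    intro ℓ x
    constructor
    · exact fun h => Finset.mem_image_of_mem _ h
    · intro h
      obtain ⟨y, hy, hxy⟩ := Finset.mem_image.mp h
      rwa [← Equiv.injective _ hxy]
  set ρ : Fin d → Equiv.Perm (Fin k) := fun ℓ =>
    (eqv.trans (((q ℓ).out.subtypeEquiv (hmemIff ℓ)).trans
      ((J ℓ).orderIsoOfFin (hJcard ℓ)).symm.toEquiv)) with hρdef
  have keyρ : ∀ (ℓ : Fin d) (a : Fin k), (q ℓ).out (emb a) = e' ℓ (ρ ℓ a) := by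
    intro ℓ a
    have h2 : ((J ℓ).orderIsoOfFin (hJcard ℓ)) (ρ ℓ a)
        = ⟨(q ℓ).out (emb a), (hmemIff ℓ (emb a)).mp (Finset.orderEmbOfFin_mem _ _ _)⟩ := by
      simp only [hρdef, Equiv.trans_apply, RelIso.coe_fn_toEquiv,
        OrderIso.apply_symm_apply, Equiv.subtypeEquiv_apply]
      exact Subtype.ext (by simp [hcoe])
    have h3 : e' ℓ (ρ ℓ a) = ((J ℓ).orderEmbOfFin (hJcard ℓ)) (ρ ℓ a) := rfl
    conv_rhs => rw [h3, ← Finset.coe_orderIsoOfFin_apply, h2]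
  have hJ0 : J 0 = I := by
    apply Finset.eq_of_subset_of_card_le
    · intro x hx
      obtain ⟨y, hy, rfl⟩ := Finset.mem_image.mp hx
      have hq0 : (q 0).out = (ext τ₀)⁻¹ := eq_inv_of_mul_eq_one_left hτ₀
      obtain ⟨a, ha⟩ : ∃ a : Fin k, emb a = y := by
        have : y ∈ Set.range (I.orderEmbOfFin hI) := by
          rw [Finset.range_orderEmbOfFin]
          exact hy
        exact this
      rw [hq0, ← map_inv, ← ha, extI]
      exact Finset.orderEmbOfFin_mem _ _ _
    · rw [hJcard 0, hI]
  set g : Equiv.Perm (Fin k) := ρ 0 * τ₀ with hgdef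
  -- condition equivalence
  have hcond : ∀ τ'' : Equiv.Perm (Fin k),
      ((q 0).out * ext ((ρ 0)⁻¹ * τ'' * g) = 1) ↔ τ'' = 1 := by
    intro τ''
    constructor
    · intro h
      have hq0 : (q 0).out = (ext τ₀)⁻¹ := eq_inv_of_mul_eq_one_left hτ₀
      rw [hq0] at h
      have h2 : ext ((ρ 0)⁻¹ * τ'' * g) = ext τ₀ := (inv_mul_eq_one.mp h).symm
      have h3 : (ρ 0)⁻¹ * τ'' * g = τ₀ := Equiv.Perm.extendDomainHom_injective eqv h2
      calc τ'' = ρ 0 * ((ρ 0)⁻¹ * τ'' * g) * g⁻¹ := by group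
        _ = ρ 0 * τ₀ * g⁻¹ := by rw [h3]
        _ = 1 := by rw [hgdef]; group
    · rintro rfl
      have h5 : (ρ 0)⁻¹ * 1 * g = τ₀ := by rw [hgdef]; group
      rw [h5, hτ₀]
  -- reindex the inner sum
  have reidx : ∑ τ : Fin d → Equiv.Perm (Fin k),
      (if (q 0).out * ext (τ 0) = 1 then
        ((((∏ ℓ, Equiv.Perm.sign ((q ℓ).out * ext (τ ℓ))) : ℤˣ) : ℤ) : F) *
          ∏ i, U (fun ℓ => ((q ℓ).out * ext (τ ℓ)) i)
      else 0)
      = ∑ τ'' : Fin d → Equiv.Perm (Fin k),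
      (if (q 0).out * ext ((ρ 0)⁻¹ * τ'' 0 * g) = 1 then
        ((((∏ ℓ, Equiv.Perm.sign ((q ℓ).out * ext ((ρ ℓ)⁻¹ * τ'' ℓ * g))) : ℤˣ) : ℤ) : F) *
          ∏ i, U (fun ℓ => ((q ℓ).out * ext ((ρ ℓ)⁻¹ * τ'' ℓ * g)) i)
      else 0) := by
    exact (Equiv.sum_comp (Equiv.piCongrRight fun ℓ =>
      (Equiv.mulLeft (ρ ℓ)⁻¹).trans (Equiv.mulRight g)) _).symm
  rw [reidx]
  have extSign : ∀ x : Equiv.Perm (Fin k),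
      Equiv.Perm.sign (ext x) = Equiv.Perm.sign x := by
    intro x
    rw [hext]
    exact Equiv.Perm.sign_extendDomain x eqv
  have hterm : ∀ τ'' : Fin d → Equiv.Perm (Fin k),
      (if (q 0).out * ext ((ρ 0)⁻¹ * τ'' 0 * g) = 1 then
        ((((∏ ℓ, Equiv.Perm.sign ((q ℓ).out * ext ((ρ ℓ)⁻¹ * τ'' ℓ * g))) : ℤˣ) : ℤ) : F) *
          ∏ i, U (fun ℓ => ((q ℓ).out * ext ((ρ ℓ)⁻¹ * τ'' ℓ * g)) i)
      else 0)
      = ((((∏ ℓ, (Equiv.Perm.sign ((q ℓ).out) * Equiv.Perm.sign (ρ ℓ))) : ℤˣ) : ℤ) : F) *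
        (∏ i ∈ Iᶜ, U (fun ℓ => (q ℓ).out i)) *
        (if τ'' 0 = 1 then
          ((((∏ ℓ, Equiv.Perm.sign (τ'' ℓ)) : ℤˣ) : ℤ) : F) *
            ∏ b, c (fun ℓ => e' ℓ (τ'' ℓ b)) else 0) := by
    intro τ''
    by_cases h : τ'' 0 = 1
    · rw [if_pos ((hcond (τ'' 0)).mpr h), if_pos h]
      have hsign : (∏ ℓ, Equiv.Perm.sign ((q ℓ).out * ext ((ρ ℓ)⁻¹ * τ'' ℓ * g)))
          = (∏ ℓ, (Equiv.Perm.sign ((q ℓ).out) * Equiv.Perm.sign (ρ ℓ))) *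
            ∏ ℓ, Equiv.Perm.sign (τ'' ℓ) := by
        have h1 : ∀ ℓ : Fin d, Equiv.Perm.sign ((q ℓ).out * ext ((ρ ℓ)⁻¹ * τ'' ℓ * g))
            = (Equiv.Perm.sign ((q ℓ).out) * Equiv.Perm.sign (ρ ℓ)) *
              Equiv.Perm.sign (τ'' ℓ) * Equiv.Perm.sign g := by
          intro ℓ
          rw [map_mul, extSign, map_mul, map_mul, Equiv.Perm.sign_inv]
          simp [mul_assoc]
        rw [Finset.prod_congr rfl (fun ℓ _ => h1 ℓ), Finset.prod_mul_distrib,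
          Finset.prod_mul_distrib, Finset.prod_const, Finset.card_univ, Fintype.card_fin]
        have hg1 : (Equiv.Perm.sign g) ^ d = 1 := by
          obtain ⟨m, hm⟩ := hd
          rw [hm, ← two_mul, pow_mul, Int.units_sq, one_pow]
        rw [hg1, mul_one]
      have htuple : ∀ (a : Fin k) (ℓ : Fin d),
          ((q ℓ).out * ext ((ρ ℓ)⁻¹ * τ'' ℓ * g)) (emb a) = e' ℓ (τ'' ℓ (g a)) := by
        intro a ℓ
        rw [Equiv.Perm.mul_apply, extI, keyρ]
        congr 1
        simp [Equiv.Perm.mul_apply]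
      have hprodI : ∏ i ∈ I, U (fun ℓ => ((q ℓ).out * ext ((ρ ℓ)⁻¹ * τ'' ℓ * g)) i)
          = ∏ b, c (fun ℓ => e' ℓ (τ'' ℓ b)) := by
        rw [show (∏ b, c (fun ℓ => e' ℓ (τ'' ℓ b)))
            = ∏ a, c (fun ℓ => e' ℓ (τ'' ℓ (g a))) from (Equiv.prod_comp g _).symm]
        refine (Finset.prod_bij (fun (a : Fin k) (_ : a ∈ Finset.univ) => emb a)
          (fun a _ => Finset.orderEmbOfFin_mem _ _ _)
          (fun a _ b _ hab => emb.injective hab) (fun i hi => ?_) (fun a _ => ?_)).symm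
        · obtain ⟨a, ha⟩ : ∃ a : Fin k, emb a = i := by
            have hr : i ∈ Set.range (I.orderEmbOfFin hI) := by
              rw [Finset.range_orderEmbOfFin]; exact hi
            exact hr
          exact ⟨a, Finset.mem_univ a, ha⟩
        · rw [show (fun ℓ => ((q ℓ).out * ext ((ρ ℓ)⁻¹ * τ'' ℓ * g)) (emb a))
            = fun ℓ => e' ℓ (τ'' ℓ (g a)) from funext (htuple a)]
          refine (hU _ ?_).symm
          show e' 0 (τ'' 0 (g a)) ∈ I
          rw [h]
          have : e' 0 (g a) ∈ J 0 := Finset.orderEmbOfFin_mem _ _ _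
          rw [hJ0] at this
          simpa using this
      have hprodIc : ∏ i ∈ Iᶜ, U (fun ℓ => ((q ℓ).out * ext ((ρ ℓ)⁻¹ * τ'' ℓ * g)) i)
          = ∏ i ∈ Iᶜ, U (fun ℓ => (q ℓ).out i) := by
        refine Finset.prod_congr rfl (fun i hi => ?_)
        have hiI : i ∉ I := by simpa using hi
        congr 1
        funext ℓ
        rw [Equiv.Perm.mul_apply, extNI _ _ hiI]
      rw [hsign,
        ← Finset.prod_mul_prod_compl I
          (fun i => U (fun ℓ => ((q ℓ).out * ext ((ρ ℓ)⁻¹ * τ'' ℓ * g)) i)),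
        hprodI, hprodIc]
      push_cast
      ring
    · rw [if_neg (fun hcon => h ((hcond (τ'' 0)).mp hcon)), if_neg h, mul_zero]
  rw [Finset.sum_congr rfl (fun τ'' _ => hterm τ''), ← Finset.mul_sum]
  have hminor : (∑ τ'' : Fin d → Equiv.Perm (Fin k),
      if τ'' 0 = 1 then
        ((((∏ ℓ, Equiv.Perm.sign (τ'' ℓ)) : ℤˣ) : ℤ) : F) *
          ∏ b, c (fun ℓ => e' ℓ (τ'' ℓ b)) else 0) = hdet (subT c e') := by
    rw [hdet]
    rfl
  rw [hminor, hc e' (fun ℓ => ((J ℓ).orderEmbOfFin (hJcard ℓ)).strictMono), mul_zero]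



end Aux

/-- generic vanishing lemma.  If `d` is even, every simple tensor
in `S` is `k`-null for some `k > 1`, and `rank_S(T) < n/(k−1)`, then
`det(T) = 0`. -/
theorem hdet_eq_zero_of_rankS_lt [Field F] {d n k : ℕ} [NeZero d] (hd : Even d)
    (hk : 1 < k) (S : Set ((Fin d → Fin n) → F)) (hS : ∀ s ∈ S, kNull k s)
    (T : (Fin d → Fin n) → F) (hT : (Decomps S T).Nonempty)
    (hr : (k - 1) * rankS S T < n) :
    hdet T = 0 := by
  classical
  obtain ⟨c, hcS, hcsum⟩ := Nat.sInf_mem hT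
  rw [← hcsum, hdet_sum_expand]
  refine Finset.sum_eq_zero fun f _ => ?_
  have hpigeon : ∃ y ∈ (Finset.univ : Finset (Fin (sInf (Decomps S T)))),
      (k - 1) < (Finset.univ.filter fun x : Fin n => f x = y).card := by
    apply Finset.exists_lt_card_fiber_of_mul_lt_card_of_maps_to
      (fun a _ => Finset.mem_univ (f a))
    simpa only [Finset.card_univ, Fintype.card_fin, Nat.mul_comm] using (show (k - 1) * sInf (Decomps S T) < n from hr)
  obtain ⟨y, -, hy⟩ := hpigeon
  have hk' : k ≤ (Finset.univ.filter fun x : Fin n => f x = y).card := by omega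
  obtain ⟨I, hIsub, hIcard⟩ := Finset.exists_subset_card_eq hk'
  refine hdet_eq_zero_of_agree_on_slices hd (hS _ (hcS y)) I hIcard ?_
  intro i hi
  have hmem := hIsub hi
  simp only [Finset.mem_filter] at hmem
  rw [hmem.2]
end

section
/- A tensor of odd partition rank 1 is 2-null: if S ∈ T^d(n) factors as S(i_1,...,i_d) = Y(i_{a_1},...,i_{a_k}) · Z(i_{b_1},...,i_{b_{d−k}}) for a set partition of [d] where the block {b_1,...,b_{d−k}} has odd size and does not contain 1, then every 2×···×2 subtensor of S has vanishing hyperdeterminant. -/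
open Finset

variable {F : Type*}

/-- a tensor of odd partition rank `1` is `2`-null. -/
theorem two_null_of_oddPartitionSimple [Field F] {d n : ℕ} [NeZero d]
    (S : (Fin d → Fin n) → F) (hS : S ∈ oddPartitionSimple) :
    kNull 2 S := by
  obtain ⟨B, T₁, T₂, hodd, h0, -, -, hT₁, hT₂, hprod⟩ := hS
  intro e he
  have hBne : B.Nonempty := by
    rcases hodd with ⟨m, hm⟩
    exact Finset.card_pos.mp (by omega)
  obtain ⟨ℓ₀, hℓ₀⟩ := hBne
  set c : Equiv.Perm (Fin 2) := Equiv.swap 0 1 with hcdef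
  have hc2 : c * c = 1 := by decide
  have hcne : c ≠ 1 := by decide
  have hcsign : Equiv.Perm.sign c = -1 := by decide
  set f : (Fin d → Equiv.Perm (Fin 2)) → F := fun σ =>
    if σ 0 = 1 then
      ((((∏ ℓ, Equiv.Perm.sign (σ ℓ)) : ℤˣ) : ℤ) : F) * ∏ i, subT S e (fun ℓ => σ ℓ i)
    else 0 with hf
  set φ : (Fin d → Equiv.Perm (Fin 2)) → (Fin d → Equiv.Perm (Fin 2)) :=
    fun σ ℓ => if ℓ ∈ B then σ ℓ * c else σ ℓ with hφ
  show ∑ σ, f σ = 0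
  refine Finset.sum_involution (fun σ _ => φ σ) ?_ ?_ (fun σ _ => Finset.mem_univ _) ?_
  · intro σ _
    by_cases h1 : σ 0 = 1
    · have h1' : φ σ 0 = 1 := by simp [hφ, h0, h1]
      have hsign : (∏ ℓ, Equiv.Perm.sign (φ σ ℓ)) = - ∏ ℓ, Equiv.Perm.sign (σ ℓ) := by
        have : ∀ ℓ, Equiv.Perm.sign (φ σ ℓ)
            = (if ℓ ∈ B then (-1 : ℤˣ) else 1) * Equiv.Perm.sign (σ ℓ) := by
          intro ℓ
          by_cases hb : ℓ ∈ B
          · simp [hφ, hb, hcsign, mul_comm]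
          · simp [hφ, hb]
        rw [Finset.prod_congr rfl fun ℓ _ => this ℓ, Finset.prod_mul_distrib]
        have hpow : (∏ ℓ, (if ℓ ∈ B then (-1 : ℤˣ) else 1)) = (-1) ^ B.card := by
          rw [Finset.prod_ite_mem, Finset.univ_inter, Finset.prod_const]
        rw [hpow, Odd.neg_one_pow hodd, neg_one_mul]
      have hT1eq : ∀ i : Fin 2,
          T₁ (fun ℓ => e ℓ (φ σ ℓ i)) = T₁ (fun ℓ => e ℓ (σ ℓ i)) := by
        intro i
        apply hT₁
        intro ℓ hℓ
        have hb : ℓ ∉ B := by simpa using hℓ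
        simp [hφ, hb]
      have hT2eq : ∀ i : Fin 2,
          T₂ (fun ℓ => e ℓ (φ σ ℓ i)) = T₂ (fun ℓ => e ℓ (σ ℓ (c i))) := by
        intro i
        apply hT₂
        intro ℓ hℓ
        have hb : ℓ ∈ B := by simpa using hℓ
        simp [hφ, hb, Equiv.Perm.mul_apply]
      have hprodeq : (∏ i, subT S e (fun ℓ => φ σ ℓ i))
          = ∏ i, subT S e (fun ℓ => σ ℓ i) := by
        simp only [subT, hprod]
        rw [Finset.prod_mul_distrib, Finset.prod_mul_distrib]
        congr 1
        · exact Finset.prod_congr rfl fun i _ => hT1eq i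
        · rw [Finset.prod_congr rfl fun i _ => hT2eq i]
          exact Fintype.prod_equiv c _ _ fun i => rfl
      simp only [hf, h1, h1', if_pos, hsign, hprodeq]
        
      push_cast
      ring
    · have h1' : φ σ 0 ≠ 1 := by simpa [hφ, h0] using h1
      simp [hf, h1, h1']
  · intro σ _ _ hcon
    have h := congrFun hcon ℓ₀
    simp only [hφ, if_pos hℓ₀] at h
    exact hcne (by simpa using mul_left_cancel (a := σ ℓ₀) (by rw [h, mul_one]))
  · intro σ _
    funext ℓ
    by_cases hb : ℓ ∈ B <;> simp [hφ, hb, mul_assoc, hc2]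
end

section
/- Nonzero hyperdeterminant forces full odd partition rank: for T ∈ T^d(n), if the odd partition rank of T is less than n, then det(T) = 0; equivalently det(T) ≠ 0 implies oprank(T) = n, hence rank(T) ≥ n, and for even d the slice rank of T equals n. -/
open Finset

variable {F : Type*}

section AuxProof
variable [Field F] {d n : ℕ}

lemma exists_decomp_of_sum {ι : Type*} [Fintype ι] {S : Set ((Fin d → Fin n) → F)}
    {T : (Fin d → Fin n) → F} (c : ι → ((Fin d → Fin n) → F))
    (hc : ∀ a, c a ∈ S ∨ c a = 0) (hsum : ∑ a, c a = T) :
    ∃ r, r ≤ Fintype.card ι ∧ r ∈ Decomps S T := by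
  classical
  let s : Finset ι := univ.filter (fun a => c a ≠ 0)
  refine ⟨s.card, Finset.card_le_univ s, fun k => c (s.equivFin.symm k), ?_, ?_⟩
  · intro k
    have hk : (s.equivFin.symm k : ι) ∈ s := (s.equivFin.symm k).2
    have hne : c (s.equivFin.symm k) ≠ 0 := (Finset.mem_filter.mp hk).2
    rcases hc (s.equivFin.symm k) with h | h
    · exact h
    · exact absurd h hne
  · rw [← hsum]
    rw [Equiv.sum_comp s.equivFin.symm (fun x : s => c x)]
    rw [Finset.sum_coe_sort s c]
    exact Finset.sum_filter_ne_zero univ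

lemma inner_zero [NeZero d] {r : ℕ} (hrn : r < n)
    (c : Fin r → ((Fin d → Fin n) → F))
    (hc : ∀ m, c m ∈ oddPartitionSimple) (f : Fin n → Fin r) :
    ∑ σ : Fin d → Equiv.Perm (Fin n),
      (if σ 0 = 1 then
        ((((∏ ℓ, Equiv.Perm.sign (σ ℓ)) : ℤˣ) : ℤ) : F) *
          ∏ i, c (f i) (fun ℓ => σ ℓ i) else 0) = 0 := by
  classical
  obtain ⟨i, j, hij, hfij⟩ := Fintype.exists_ne_map_eq_of_card_lt f (by simpa using hrn)
  obtain ⟨B, U, V, hodd, h0B, hU0, hV0, hUdep, hVdep, hcf⟩ := hc (f i)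
  set τ : Equiv.Perm (Fin n) := Equiv.swap i j with hτ
  set g : (Fin d → Equiv.Perm (Fin n)) → (Fin d → Equiv.Perm (Fin n)) :=
    fun σ ℓ => if ℓ ∈ B then σ ℓ * τ else σ ℓ with hg
  apply Finset.sum_ninvolution g
  · intro σ
    by_cases h0 : σ 0 = 1
    · have hg0 : g σ 0 = 1 := by simp [hg, h0B, h0]
      rw [if_pos h0, if_pos hg0]
      have hsign : (∏ ℓ, Equiv.Perm.sign (g σ ℓ)) = - ∏ ℓ, Equiv.Perm.sign (σ ℓ) := by
        have hstep : ∀ ℓ : Fin d, Equiv.Perm.sign (g σ ℓ)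
            = Equiv.Perm.sign (σ ℓ) * (if ℓ ∈ B then (-1 : ℤˣ) else 1) := by
          intro ℓ
          by_cases hℓ : ℓ ∈ B <;>
            simp [hg, hℓ, hτ, Equiv.Perm.sign_swap hij]
        rw [Finset.prod_congr rfl (fun ℓ _ => hstep ℓ), Finset.prod_mul_distrib,
          Finset.prod_ite_mem, Finset.univ_inter, Finset.prod_const,
          Odd.neg_one_pow hodd, mul_neg_one]
      have hrow : ∀ k : Fin n, k ≠ i → k ≠ j →
          (fun ℓ => g σ ℓ k) = fun ℓ => σ ℓ k := by
        intro k hki hkj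
        funext ℓ
        by_cases hℓ : ℓ ∈ B
        · simp [hg, hℓ, hτ, Equiv.Perm.mul_apply, Equiv.swap_apply_of_ne_of_ne hki hkj]
        · simp [hg, hℓ]
      have hUi : U (fun ℓ => g σ ℓ i) = U (fun ℓ => σ ℓ i) := by
        apply hUdep
        intro ℓ hℓ
        have hℓ' : ℓ ∉ B := by simpa using hℓ
        simp [hg, hℓ']
      have hVi : V (fun ℓ => g σ ℓ i) = V (fun ℓ => σ ℓ j) := by
        apply hVdep
        intro ℓ hℓ
        have hℓ' : ℓ ∈ B := by simpa using hℓ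
        simp [hg, hℓ', hτ, Equiv.Perm.mul_apply, Equiv.swap_apply_left]
      have hUj : U (fun ℓ => g σ ℓ j) = U (fun ℓ => σ ℓ j) := by
        apply hUdep
        intro ℓ hℓ
        have hℓ' : ℓ ∉ B := by simpa using hℓ
        simp [hg, hℓ']
      have hVj : V (fun ℓ => g σ ℓ j) = V (fun ℓ => σ ℓ i) := by
        apply hVdep
        intro ℓ hℓ
        have hℓ' : ℓ ∈ B := by simpa using hℓ
        simp [hg, hℓ', hτ, Equiv.Perm.mul_apply, Equiv.swap_apply_right]
      have hjmem : j ∈ univ.erase i := Finset.mem_erase.2 ⟨hij.symm, Finset.mem_univ j⟩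
      have hsplit : ∀ G : Fin n → F, ∏ k, G k
          = G i * (G j * ∏ k ∈ (univ.erase i).erase j, G k) := by
        intro G
        rw [← Finset.mul_prod_erase univ G (Finset.mem_univ i),
          ← Finset.mul_prod_erase (univ.erase i) G hjmem]
      have hprod : ∏ k, c (f k) (fun ℓ => g σ ℓ k) = ∏ k, c (f k) (fun ℓ => σ ℓ k) := by
        rw [hsplit (fun k => c (f k) (fun ℓ => g σ ℓ k)),
          hsplit (fun k => c (f k) (fun ℓ => σ ℓ k))]
        have hrest : ∏ k ∈ (univ.erase i).erase j, c (f k) (fun ℓ => g σ ℓ k)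
            = ∏ k ∈ (univ.erase i).erase j, c (f k) (fun ℓ => σ ℓ k) := by
          apply Finset.prod_congr rfl
          intro k hk
          have hkj : k ≠ j := (Finset.mem_erase.1 hk).1
          have hki : k ≠ i := (Finset.mem_erase.1 (Finset.mem_erase.1 hk).2).1
          rw [hrow k hki hkj]
        have hci : ∀ x, c (f i) x = U x * V x := fun x => congrFun hcf x
        have hcj : ∀ x, c (f j) x = U x * V x := fun x => by rw [← hfij]; exact hci x
        rw [hrest, hci, hci, hcj, hcj, hUi, hVi, hUj, hVj]
        ring
      rw [hsign, hprod]
      push_cast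
      ring
    · have hgs : g σ 0 = σ 0 := if_neg h0B
      rw [if_neg h0, if_neg (by rw [hgs]; exact h0)]
      ring
  · intro σ _ hgσ
    obtain ⟨ℓ₀, hℓ₀⟩ := Finset.card_pos.mp hodd.pos
    have h1 : g σ ℓ₀ = σ ℓ₀ := congrFun hgσ ℓ₀
    rw [hg] at h1
    simp only [if_pos hℓ₀] at h1
    have hτ1 : τ = 1 := mul_left_cancel (h1.trans (mul_one (σ ℓ₀)).symm)
    have h2 : τ i = j := by rw [hτ]; exact Equiv.swap_apply_left i j
    rw [hτ1] at h2
    simp at h2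
    exact hij h2
  · intro σ
    exact Finset.mem_univ _
  · intro σ
    funext ℓ
    by_cases hℓ : ℓ ∈ B
    · simp [hg, hℓ, hτ, mul_assoc, Equiv.swap_mul_self]
    · simp [hg, hℓ]

lemma hdet_sum_eq_zero [NeZero d] {r : ℕ} (hrn : r < n)
    (c : Fin r → ((Fin d → Fin n) → F)) (hc : ∀ m, c m ∈ oddPartitionSimple) :
    hdet (∑ m, c m) = 0 := by
  classical
  unfold hdet
  have hexp : ∀ σ : Fin d → Equiv.Perm (Fin n),
      (if σ 0 = 1 then ((((∏ ℓ, Equiv.Perm.sign (σ ℓ)) : ℤˣ) : ℤ) : F) *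
          ∏ i, (∑ m, c m) (fun ℓ => σ ℓ i) else 0)
        = ∑ f : Fin n → Fin r,
            (if σ 0 = 1 then ((((∏ ℓ, Equiv.Perm.sign (σ ℓ)) : ℤˣ) : ℤ) : F) *
              ∏ i, c (f i) (fun ℓ => σ ℓ i) else 0) := by
    intro σ
    by_cases h : σ 0 = 1
    · have h1 : ∏ i, (∑ m, c m) (fun ℓ => σ ℓ i)
          = ∑ f : Fin n → Fin r, ∏ i, c (f i) (fun ℓ => σ ℓ i) := by
        simp only [Finset.sum_apply]
        exact Fintype.prod_sum _
      simp only [if_pos h, h1, Finset.mul_sum]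
    · simp [h]
  rw [Finset.sum_congr rfl (fun σ _ => hexp σ), Finset.sum_comm]
  exact Finset.sum_eq_zero fun f _ => inner_zero hrn c hc f

lemma exists_decomp_odd [NeZero d] (hd : 2 ≤ d) (T : (Fin d → Fin n) → F) :
    ∃ r, r ≤ n ∧ r ∈ Decomps oddPartitionSimple T := by
  classical
  have hd1 : 1 < d := hd
  set k1 : Fin d := ⟨1, hd1⟩ with hk1
  have hk10 : k1 ≠ 0 := by simp [hk1, Fin.ext_iff]
  set c : Fin n → ((Fin d → Fin n) → F) :=
    fun v i => T (Function.update i k1 v) * (if i k1 = v then 1 else 0) with hcdef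
  have hmem : ∀ v, c v ∈ oddPartitionSimple ∨ c v = 0 := by
    intro v
    by_cases h : (fun i => T (Function.update i k1 v)) = (0 : (Fin d → Fin n) → F)
    · right
      funext i
      have h2 := congrFun h i
      simp only [Pi.zero_apply] at h2
      simp [hcdef, h2]
    · left
      refine ⟨{k1}, fun i => T (Function.update i k1 v),
        fun i => if i k1 = v then 1 else 0, by simp, ?_, h, ?_, ?_, ?_, rfl⟩
      · simp only [Finset.mem_singleton]
        exact fun hh => hk10 hh.symm
      · intro h2
        have := congrFun h2 (fun _ => v)
        simp at this
      · intro a b hab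
        have : Function.update a k1 v = Function.update b k1 v := by
          funext ℓ
          by_cases hℓ : ℓ = k1
          · subst hℓ; simp
          · rw [Function.update_of_ne hℓ, Function.update_of_ne hℓ]
            exact hab ℓ (by simp [hℓ])
        simp [this]
      · intro a b hab
        have h3 : a k1 = b k1 := hab k1 (by simp)
        simp [h3]
  have hsum : ∑ v, c v = T := by
    funext i
    rw [Finset.sum_apply]
    have h1 : ∀ v : Fin n, c v i = if i k1 = v then T (Function.update i k1 v) else 0 := by
      intro v
      by_cases h : i k1 = v <;> simp [hcdef, h]
    rw [Finset.sum_congr rfl (fun v _ => h1 v), Finset.sum_ite_eq]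
    simp [Function.update_eq_self]
  obtain ⟨r, hr, hrmem⟩ := exists_decomp_of_sum c hmem hsum
  exact ⟨r, by simpa using hr, hrmem⟩

lemma tensor_subset_odd [NeZero d] (hd : 2 ≤ d) {T : (Fin d → Fin n) → F}
    (hT : T ∈ tensorSimple) : T ∈ oddPartitionSimple := by
  classical
  obtain ⟨v, hv, rfl⟩ := hT
  have hd1 : 1 < d := hd
  set k1 : Fin d := ⟨1, hd1⟩ with hk1
  have hk10 : k1 ≠ 0 := by simp [hk1, Fin.ext_iff]
  have hex : ∀ ℓ, ∃ x, v ℓ x ≠ 0 := by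
    intro ℓ
    obtain ⟨x, hx⟩ := Function.ne_iff.mp (hv ℓ)
    exact ⟨x, hx⟩
  choose a ha using hex
  refine ⟨{k1}, fun i => ∏ ℓ ∈ univ.erase k1, v ℓ (i ℓ), fun i => v k1 (i k1),
    by simp, ?_, ?_, ?_, ?_, ?_, ?_⟩
  · simp only [Finset.mem_singleton]
    exact fun hh => hk10 hh.symm
  · intro h
    have h2 := congrFun h a
    simp only [Pi.zero_apply] at h2
    exact (Finset.prod_ne_zero_iff.mpr fun ℓ _ => ha ℓ) h2
  · intro h
    have h2 := congrFun h (fun _ => a k1)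
    simp only [Pi.zero_apply] at h2
    exact ha k1 h2
  · intro x y hxy
    simp only []
    apply Finset.prod_congr rfl
    intro ℓ hℓ
    have h3 := hxy ℓ (by simp [(Finset.mem_erase.mp hℓ).1])
    rw [h3]
  · intro x y hxy
    have h3 := hxy k1 (by simp)
    simp only [h3]
  · funext x
    rw [mul_comm]
    exact (Finset.mul_prod_erase _ _ (Finset.mem_univ k1)).symm

lemma slice_subset_odd [NeZero d] (hd : 2 ≤ d) (hde : Even d) {T : (Fin d → Fin n) → F}
    (hT : T ∈ sliceSimple) : T ∈ oddPartitionSimple ∨ T = 0 := by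
  classical
  obtain ⟨k, v, T₁, hv, hdep, rfl⟩ := hT
  by_cases hT1 : T₁ = 0
  · right
    funext x
    simp [hT1]
  obtain ⟨a, ha⟩ := Function.ne_iff.mp hv
  simp only [Pi.zero_apply] at ha
  left
  by_cases hk : k = 0
  · subst hk
    refine ⟨({0} : Finset (Fin d))ᶜ, fun i => v (i 0), T₁, ?_, by simp, ?_, hT1, ?_, ?_, rfl⟩
    · rw [Finset.card_compl, Finset.card_singleton, Fintype.card_fin]
      exact Nat.Even.sub_odd (by omega) hde odd_one
    · intro h
      have h2 := congrFun h (fun _ => a)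
      simp only [Pi.zero_apply] at h2
      exact ha h2
    · intro x y hxy
      have h3 := hxy 0 (by simp)
      simp only [h3]
    · intro x y hxy
      exact hdep x y (fun ℓ hℓ => hxy ℓ (by simpa using hℓ))
  · refine ⟨{k}, T₁, fun i => v (i k), by simp, ?_, hT1, ?_, ?_, ?_, ?_⟩
    · simp only [Finset.mem_singleton]
      exact fun hh => hk hh.symm
    · intro h
      have h2 := congrFun h (fun _ => a)
      simp only [Pi.zero_apply] at h2
      exact ha h2
    · intro x y hxy
      exact hdep x y (fun ℓ hℓ => hxy ℓ (by simpa using hℓ))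
    · intro x y hxy
      have h3 := hxy k (by simp)
      simp only [h3]
    · funext x
      exact mul_comm _ _

lemma slice_decomp [NeZero d] (T : (Fin d → Fin n) → F) :
    n ∈ Decomps sliceSimple T := by
  classical
  refine ⟨fun v i => (if i 0 = v then 1 else 0) * T (Function.update i 0 v), ?_, ?_⟩
  · intro v
    refine ⟨0, fun x => if x = v then 1 else 0, fun i => T (Function.update i 0 v), ?_, ?_, rfl⟩
    · intro h
      have := congrFun h v
      simp at this
    · intro x y hxy
      have : Function.update x 0 v = Function.update y 0 v := by
        funext ℓ
        by_cases hℓ : ℓ = 0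
        · subst hℓ; simp
        · rw [Function.update_of_ne hℓ, Function.update_of_ne hℓ]
          exact hxy ℓ (by simp [hℓ])
      simp [this]
  · funext i
    rw [Finset.sum_apply]
    have h1 : ∀ v : Fin n,
        (if i 0 = v then (1 : F) else 0) * T (Function.update i 0 v)
          = if i 0 = v then T (Function.update i 0 v) else 0 := by
      intro v
      by_cases h : i 0 = v <;> simp [h]
    rw [Finset.sum_congr rfl (fun v _ => h1 v), Finset.sum_ite_eq]
    simp [Function.update_eq_self]

lemma tensor_decomp [NeZero d] (T : (Fin d → Fin n) → F) :
    (Decomps tensorSimple T).Nonempty := by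
  classical
  set c : (Fin d → Fin n) → ((Fin d → Fin n) → F) :=
    fun j i => T j * ∏ ℓ, (if i ℓ = j ℓ then (1 : F) else 0) with hcdef
  have hsum : ∑ j, c j = T := by
    funext i
    rw [Finset.sum_apply]
    have h1 : ∀ j : Fin d → Fin n, c j i = if i = j then T j else 0 := by
      intro j
      by_cases h : i = j
      · subst h; simp [hcdef]
      · obtain ⟨ℓ, hℓ⟩ := Function.ne_iff.mp h
        simp only [hcdef]
        rw [Finset.prod_eq_zero (Finset.mem_univ ℓ) (by simp [hℓ]), mul_zero, if_neg h]
    rw [Finset.sum_congr rfl (fun j _ => h1 j), Finset.sum_ite_eq]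
    simp
  have hmem : ∀ j, c j ∈ tensorSimple ∨ c j = 0 := by
    intro j
    by_cases h : T j = 0
    · right
      funext i
      simp [hcdef, h]
    · left
      refine ⟨fun ℓ x => (if ℓ = 0 then T j else 1) * (if x = j ℓ then 1 else 0), ?_, ?_⟩
      · intro ℓ h0
        have h2 := congrFun h0 (j ℓ)
        by_cases hℓ : ℓ = 0 <;> simp [hℓ, h] at h2
      · funext i
        simp only [hcdef]
        rw [Finset.prod_mul_distrib, Finset.prod_ite_eq' univ (0 : Fin d) (fun _ => T j)]
        simp
  obtain ⟨r, _, hrmem⟩ := exists_decomp_of_sum c hmem hsum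
  exact ⟨r, hrmem⟩

end AuxProof

/-- a nonzero hyperdeterminant forces full odd partition rank.
If `oprank(T) < n` then `det(T) = 0`; equivalently `det(T) ≠ 0` implies
`oprank(T) = n`, hence the tensor rank of `T` is at least `n`, and for even `d`
the slice rank of `T` equals `n`. -/
theorem oddPartitionRank_full_of_hdet_ne_zero [Field F] {d n : ℕ} [NeZero d]
    (hd : 2 ≤ d) (T : (Fin d → Fin n) → F) :
    (rankS oddPartitionSimple T < n → hdet T = 0) ∧
    (hdet T ≠ 0 →
      rankS oddPartitionSimple T = n ∧ n ≤ rankS tensorSimple T ∧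
        (Even d → rankS sliceSimple T = n)) := by
  classical
  obtain ⟨r0, hr0n, hr0⟩ := exists_decomp_odd (F := F) hd T
  have hdle : rankS oddPartitionSimple T ≤ n := le_trans (Nat.sInf_le hr0) hr0n
  have hne : (Decomps oddPartitionSimple T).Nonempty := ⟨r0, hr0⟩
  have key : rankS oddPartitionSimple T < n → hdet T = 0 := by
    intro hlt
    obtain ⟨c, hc, hsum⟩ := Nat.sInf_mem hne
    rw [← hsum]
    exact hdet_sum_eq_zero hlt c hc
  refine ⟨key, fun hdet0 => ?_⟩
  have hrank : rankS oddPartitionSimple T = n := by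
    rcases lt_or_eq_of_le hdle with h | h
    · exact absurd (key h) hdet0
    · exact h
  refine ⟨hrank, ?_, ?_⟩
  · obtain ⟨c, hc, hsum⟩ := Nat.sInf_mem (tensor_decomp T)
    have hm : rankS tensorSimple T ∈ Decomps oddPartitionSimple T :=
      ⟨c, fun m => tensor_subset_odd hd (hc m), hsum⟩
    calc n = rankS oddPartitionSimple T := hrank.symm
      _ ≤ _ := Nat.sInf_le hm
  · intro hde
    have h1 : rankS sliceSimple T ≤ n := Nat.sInf_le (slice_decomp T)
    have hSne : (Decomps sliceSimple T).Nonempty := ⟨n, slice_decomp T⟩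
    obtain ⟨c, hc, hsum⟩ := Nat.sInf_mem hSne
    obtain ⟨r, hr, hrmem⟩ :=
      exists_decomp_of_sum c (fun m => slice_subset_odd hd hde (hc m)) hsum
    have h2 : n ≤ rankS sliceSimple T := by
      calc n = rankS oddPartitionSimple T := hrank.symm
        _ ≤ r := Nat.sInf_le hrmem
        _ ≤ Fintype.card (Fin (rankS sliceSimple T)) := hr
        _ = rankS sliceSimple T := Fintype.card_fin _
    omega
end
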